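/- arXiv:1505.03829 — 2 statements merged into one kernel-verified Lean document; each statement's English description precedes it below -/
import Mathlib

section
/- Let n ≥ 1 and let A be any commutative ring. Then: (a) the set of products Aˣ·V₊(A)·V₋(A) equals {f ∈ Lⁿ(A) : coeff₀(f) ∈ Aˣ and f₋ = Σ_{l<0} coeff_l(f) t^l is nilpotent in Lⁿ(A)}; (b) the set of products (1+Nil(A))·V₊(A)·V₋(A), where Nil(A) is the nilradical of A, equals {f ∈ Lⁿ(A) : coeff₀(f) − 1 is nilpotent in A and f₋ is nilpotent in Lⁿ(A)}. In particular, both sets consist of units and are subgroups of Lⁿ(A)ˣ. -/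
noncomputable section

open scoped Classical TensorProduct

/-- Iterated Laurent series carrier together with its ring structure. -/
def IterAux (A : Type) [CommRing A] : ℕ → (T : Type) × CommRing T
  | 0 => ⟨A, inferInstance⟩
  | n+1 =>
    letI := (IterAux A n).2
    ⟨LaurentSeries (IterAux A n).1, inferInstance⟩

/-- `IterLaurent A n = A((t₁))…((tₙ))`, the ring of iterated Laurent series:
`IterLaurent A 0 = A` and `IterLaurent A (n+1) = (IterLaurent A n)((t_{n+1}))`. -/
def IterLaurent (A : Type) [CommRing A] (n : ℕ) : Type := (IterAux A n).1

instance iterLaurentCommRing (A : Type) [CommRing A] (n : ℕ) : CommRing (IterLaurent A n) :=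
  (IterAux A n).2

/-- View an iterated Laurent series as a Laurent series over the previous stage. -/
def IterLaurent.down {A : Type} [CommRing A] {n : ℕ} (f : IterLaurent A (n+1)) :
    LaurentSeries (IterLaurent A n) := f

/-- View a Laurent series over the previous stage as an iterated Laurent series. -/
def IterLaurent.up {A : Type} [CommRing A] {n : ℕ} (f : LaurentSeries (IterLaurent A n)) :
    IterLaurent A (n+1) := f

/-- The coefficient of `t^l = t₁^{l₁}⋯tₙ^{lₙ}` in an iterated Laurent series. -/
def iterCoeff (A : Type) [CommRing A] : {n : ℕ} → IterLaurent A n → (Fin n → ℤ) → A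
  | 0, f, _ => f
  | n+1, f, l => iterCoeff A (f.down.coeff (l (Fin.last n))) (fun i => l i.castSucc)

/-- The lexicographic order on `ℤⁿ` "from the last coordinate":
`l < l'` iff `lₙ < l'ₙ`, or `lₙ = l'ₙ` and `(l₁,…,l_{n-1}) < (l'₁,…,l'_{n-1})`. -/
def lexLt : {n : ℕ} → (Fin n → ℤ) → (Fin n → ℤ) → Prop
  | 0, _, _ => False
  | n+1, a, b => a (Fin.last n) < b (Fin.last n) ∨
      (a (Fin.last n) = b (Fin.last n) ∧
        lexLt (fun i => a i.castSucc) (fun i => b i.castSucc))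

/-- The monomial `t^l = t₁^{l₁} ⋯ tₙ^{lₙ}`. -/
def tpow (A : Type) [CommRing A] : {n : ℕ} → (Fin n → ℤ) → IterLaurent A n
  | 0, _ => 1
  | n+1, l => IterLaurent.up
      (HahnSeries.single (l (Fin.last n)) (tpow A (fun i => l i.castSucc)))

/-- Constant series, as a ring homomorphism `A →+* A((t₁))…((tₙ))`. -/
def iterC (A : Type) [CommRing A] : (n : ℕ) → A →+* IterLaurent A n
  | 0 => RingHom.id A
  | n+1 => (HahnSeries.C : (IterLaurent A n) →+* LaurentSeries (IterLaurent A n)).comp (iterC A n)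

/-- The truncation `f₋ = Σ_{l<0} coeff_l(f) t^l` (strictly negative part w.r.t. the
lexicographic order from the last coordinate). -/
def truncNeg (A : Type) [CommRing A] : {n : ℕ} → IterLaurent A n → IterLaurent A n
  | 0, _ => 0
  | n+1, f => IterLaurent.up
      { coeff := fun k =>
          if k < 0 then f.down.coeff k else if k = 0 then truncNeg A (f.down.coeff 0) else 0
        isPWO_support' := by
          refine (f.down.isPWO_support.union (Set.finite_singleton 0).isPWO).mono ?_
          intro k hk
          simp only [Function.mem_support] at hk
          rcases lt_trichotomy k 0 with h | h | h
          · left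
            simp only [if_pos h] at hk
            exact hk
          · right; simp [h]
          · exfalso; apply hk; rw [if_neg (not_lt.2 h.le), if_neg h.ne'] }

/-- The truncation `f_{≤0} = Σ_{l≤0} coeff_l(f) t^l` (nonpositive part). -/
def truncNonpos (A : Type) [CommRing A] : {n : ℕ} → IterLaurent A n → IterLaurent A n
  | 0, f => f
  | n+1, f => IterLaurent.up
      { coeff := fun k =>
          if k < 0 then f.down.coeff k else if k = 0 then truncNonpos A (f.down.coeff 0) else 0
        isPWO_support' := by
          refine (f.down.isPWO_support.union (Set.finite_singleton 0).isPWO).mono ?_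
          intro k hk
          simp only [Function.mem_support] at hk
          rcases lt_trichotomy k 0 with h | h | h
          · left
            simp only [if_pos h] at hk
            exact hk
          · right; simp [h]
          · exfalso; apply hk; rw [if_neg (not_lt.2 h.le), if_neg h.ne'] }

/-- `V₊(A)`: iterated Laurent series with constant term `1` and no nonzero
coefficients below `0`. -/
def MemVplus (A : Type) [CommRing A] {n : ℕ} (f : IterLaurent A n) : Prop :=
  iterCoeff A f 0 = 1 ∧ ∀ l, lexLt l 0 → iterCoeff A f l = 0

/-- `V₋(A)`: iterated Laurent series with constant term `1`, no nonzero coefficients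
above `0`, and `f - 1` nilpotent in `Lⁿ(A)`. -/
def MemVminus (A : Type) [CommRing A] {n : ℕ} (f : IterLaurent A n) : Prop :=
  iterCoeff A f 0 = 1 ∧ (∀ l, lexLt 0 l → iterCoeff A f l = 0) ∧ IsNilpotent (f - 1)

/-- `(Lⁿ𝔾ₘ)⁰(A)`: invertible constant term and nilpotent strictly negative part. -/
def MemZeroMul (A : Type) [CommRing A] {n : ℕ} (f : IterLaurent A n) : Prop :=
  IsUnit (iterCoeff A f 0) ∧ IsNilpotent (truncNeg A f)

/-- `(Lⁿ𝔾ₘ)^♯(A)`: constant term `1 + nilpotent` and nilpotent strictly negative part. -/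
def MemSharpMul (A : Type) [CommRing A] {n : ℕ} (f : IterLaurent A n) : Prop :=
  IsNilpotent (iterCoeff A f 0 - 1) ∧ IsNilpotent (truncNeg A f)

/-- `(Lⁿ𝔾ₐ)^♯(A)`: nilpotent nonpositive part. -/
def MemSharpAdd (A : Type) [CommRing A] {n : ℕ} (g : IterLaurent A n) : Prop :=
  IsNilpotent (truncNonpos A g)

/-- The residue: the coefficient of `t₁⁻¹⋯tₙ⁻¹`. -/
def iterRes (A : Type) [CommRing A] {n : ℕ} (f : IterLaurent A n) : A :=
  iterCoeff A f (fun _ => -1)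

/-- The derivative with respect to the outer Laurent variable:
`coeff k ↦ (k+1) • coeff (k+1)`. -/
def hahnDerivHom (B : Type) [CommRing B] : LaurentSeries B →+ LaurentSeries B where
  toFun f :=
    { coeff := fun k => (k + 1) • f.coeff (k + 1)
      isPWO_support' := by
        have himg : (Function.support fun k : ℤ => (k + 1) • f.coeff (k + 1)) ⊆
            (fun k : ℤ => k - 1) '' f.support := by
          intro k hk
          simp only [Function.mem_support] at hk
          refine ⟨k + 1, ?_, by ring⟩
          intro h0
          apply hk
          rw [h0, smul_zero]
        exact (f.isPWO_support.image_of_monotone (fun a b hab => by omega)).mono himg }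
  map_zero' := by ext k; simp
  map_add' f g := by ext k; simp [smul_add]

/-- Coefficientwise application of an additive map, on Laurent series. -/
def hahnMapHom {B C : Type} [CommRing B] [CommRing C] (φ : B →+ C) :
    HahnSeries ℤ B →+ HahnSeries ℤ C where
  toFun f := f.map φ
  map_zero' := by ext; simp
  map_add' f g := by ext; simp

/-- The formal partial derivative `∂/∂tⱼ` as an additive map: it is characterized by
`coeff_l (∂f/∂tⱼ) = (lⱼ + 1) • coeff_{l + eⱼ} f`. -/
def pderivHom (A : Type) [CommRing A] : {n : ℕ} → Fin n → (IterLaurent A n →+ IterLaurent A n)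
  | 0, j => j.elim0
  | n+1, j =>
    show HahnSeries ℤ (IterLaurent A n) →+ HahnSeries ℤ (IterLaurent A n) from
    if h : (j : ℕ) < n then
      hahnMapHom (B := IterLaurent A n) (C := IterLaurent A n) (pderivHom A (⟨j, h⟩ : Fin n))
    else hahnDerivHom (IterLaurent A n)

/-- The formal partial derivative `∂f/∂tⱼ` of an iterated Laurent series. -/
def pderivIter (A : Type) [CommRing A] {n : ℕ} (j : Fin n) (f : IterLaurent A n) :
    IterLaurent A n := pderivHom A j f

/-- Coefficientwise application of a ring homomorphism, on Laurent series. -/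
def hahnMapRingHom {B C : Type} [CommRing B] [CommRing C] (φ : B →+* C) :
    HahnSeries ℤ B →+* HahnSeries ℤ C where
  toFun f := f.map φ
  map_one' := by
    ext g
    by_cases h : g = 0 <;> simp [h]
  map_mul' x y := by
    have h := HahnSeries.map_mul (Γ := ℤ) (f := (φ : B →ₙ+* C)) (x := x) (y := y)
    ext g
    have := congrArg (fun z : HahnSeries ℤ C => z.coeff g) h
    exact this
  map_zero' := by ext; simp
  map_add' x y := by ext; simp

/-- The ring homomorphism `Lⁿ(A) →+* Lⁿ(B)` induced by `σ : A →+* B`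
(functoriality of iterated Laurent series). -/
def iterMap {A B : Type} [CommRing A] [CommRing B] (σ : A →+* B) :
    (n : ℕ) → (IterLaurent A n →+* IterLaurent B n)
  | 0 => σ
  | n+1 =>
    show HahnSeries ℤ (IterLaurent A n) →+* HahnSeries ℤ (IterLaurent B n) from
    hahnMapRingHom (B := IterLaurent A n) (C := IterLaurent B n) (iterMap σ n)

theorem tpow_zero (A : Type) [CommRing A] : ∀ {n : ℕ}, tpow A (0 : Fin n → ℤ) = 1
  | 0 => rfl
  | n+1 => by
    show IterLaurent.up (HahnSeries.single ((0 : Fin (n+1) → ℤ) (Fin.last n))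
      (tpow A fun i => (0 : Fin (n+1) → ℤ) i.castSucc)) = 1
    have h1 : (fun i : Fin n => (0 : Fin (n+1) → ℤ) i.castSucc) = (0 : Fin n → ℤ) := rfl
    rw [h1, tpow_zero A]
    exact congrArg IterLaurent.up (HahnSeries.single_zero_one)

theorem tpow_mul_tpow (A : Type) [CommRing A] :
    ∀ {n : ℕ} (l l' : Fin n → ℤ), tpow A l * tpow A l' = tpow A (l + l')
  | 0, _, _ => one_mul 1
  | n+1, l, l' => by
    show IterLaurent.up (HahnSeries.single (l (Fin.last n)) (tpow A fun i => l i.castSucc) *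
        HahnSeries.single (l' (Fin.last n)) (tpow A fun i => l' i.castSucc)) = _
    rw [HahnSeries.single_mul_single, tpow_mul_tpow A]
    rfl

/-- The variable `tᵢ` as a unit of `Lⁿ(A)`. -/
def tUnit (A : Type) [CommRing A] (n : ℕ) (i : Fin n) : (IterLaurent A n)ˣ where
  val := tpow A (fun j => if j = i then 1 else 0)
  inv := tpow A (fun j => if j = i then -1 else 0)
  val_inv := by
    rw [tpow_mul_tpow A]
    have : ((fun j : Fin n => if j = i then (1:ℤ) else 0) + fun j => if j = i then -1 else 0)
        = 0 := by funext j; by_cases h : j = i <;> simp [h]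
    rw [this, tpow_zero A]
  inv_val := by
    rw [tpow_mul_tpow A]
    have : ((fun j : Fin n => if j = i then (-1:ℤ) else 0) + fun j => if j = i then 1 else 0)
        = 0 := by funext j; by_cases h : j = i <;> simp [h]
    rw [this, tpow_zero A]

/-- A unit of `A` as a constant unit of `Lⁿ(A)`. -/
def constUnit (A : Type) [CommRing A] (n : ℕ) (a : Aˣ) : (IterLaurent A n)ˣ :=
  Units.map (iterC A n).toMonoidHom a

/-! ## Statement 5 -/


namespace HahnAux

variable {B : Type*} [CommRing B]

/-- coefficient as an additive hom -/
def coeffHom (k : ℤ) : HahnSeries ℤ B →+ B where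
  toFun x := x.coeff k
  map_zero' := rfl
  map_add' _ _ := rfl

lemma support_inter_Iic_finite (x : HahnSeries ℤ B) (c : ℤ) :
    (x.support ∩ Set.Iic c).Finite := by
  rcases Set.eq_empty_or_nonempty x.support with h | h
  · simp [h]
  · refine (Set.finite_Icc (x.isWF_support.min h) c).subset ?_
    rintro k ⟨hk1, hk2⟩
    exact ⟨x.isWF_support.min_le h hk1, hk2⟩

lemma eq_sum_single {x : HahnSeries ℤ B} {s : Finset ℤ} (h : x.support ⊆ s) :
    x = ∑ k ∈ s, HahnSeries.single k (x.coeff k) := by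
  ext j
  have : ((∑ k ∈ s, HahnSeries.single k (x.coeff k)).coeff j)
      = ∑ k ∈ s, (HahnSeries.single k (x.coeff k)).coeff j := by
    exact map_sum (coeffHom j) _ s
  rw [this]
  have h2 : ∀ k ∈ s, (HahnSeries.single k (x.coeff k)).coeff j
      = if j = k then x.coeff k else 0 := fun k _ => by
    by_cases h : j = k <;> simp [h]
  rw [Finset.sum_congr rfl h2, Finset.sum_ite_eq s j (fun k => x.coeff k)]
  by_cases hj : j ∈ s
  · simp [hj]
  · simp only [hj, if_false]
    by_contra hne
    exact hj (h ((x.mem_support j).2 hne))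

lemma single_pow (k : ℤ) (r : B) (m : ℕ) :
    (HahnSeries.single k r) ^ m = HahnSeries.single ((m : ℤ) * k) (r ^ m) := by
  induction m with
  | zero => simp [← HahnSeries.single_zero_one]
  | succ m ih =>
      rw [pow_succ, ih, HahnSeries.single_mul_single, pow_succ]
      norm_num
      ring_nf

lemma single_nilpotent {k : ℤ} {r : B} (h : IsNilpotent r) :
    IsNilpotent (HahnSeries.single k r : HahnSeries ℤ B) := by
  obtain ⟨m, hm⟩ := h
  exact ⟨m, by simp [single_pow, hm]⟩

lemma support_pow_subset {x : HahnSeries ℤ B} {c : ℤ}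
    (h : x.support ⊆ Set.Ici c) (m : ℕ) :
    (x ^ m).support ⊆ Set.Ici ((m : ℤ) * c) := by
  induction m with
  | zero =>
      intro k hk
      have hk1 : k ∈ (1 : HahnSeries ℤ B).support := by simpa using hk
      rw [← HahnSeries.single_zero_one] at hk1
      have := HahnSeries.support_single_subset hk1
      simp only [Set.mem_singleton_iff] at this
      simp [this]
  | succ m ih =>
      intro k hk
      rw [pow_succ] at hk
      obtain ⟨i, hi, j, hj, rfl⟩ := HahnSeries.support_mul_subset hk
      have h1 := ih hi
      have h2 := h hj
      simp only [Set.mem_Ici] at h1 h2 ⊢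
      push_cast
      linarith

lemma mul_coeff_of_le {x y : HahnSeries ℤ B} {c d : ℤ}
    (hx : x.support ⊆ Set.Ici c) (hy : y.support ⊆ Set.Ici d) :
    (x * y).coeff (c + d) = x.coeff c * y.coeff d := by
  rw [HahnSeries.coeff_mul]
  have hsub : Finset.antidiagonal x.isPWO_support y.isPWO_support (c + d)
      ⊆ {((c : ℤ), (d : ℤ))} := by
    intro p hp
    rw [Finset.mem_antidiagonal] at hp
    obtain ⟨h1, h2, h3⟩ := hp
    have hc := hx h1
    have hd := hy h2
    simp only [Set.mem_Ici] at hc hd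
    have : p.1 = c := by omega
    have : p.2 = d := by omega
    simp only [Finset.mem_singleton, Prod.ext_iff]
    omega
  rcases Finset.subset_singleton_iff.1 hsub with he | he
  · rw [he, Finset.sum_empty]
    by_contra hne
    have hcd : ((c : ℤ), (d : ℤ)) ∈ Finset.antidiagonal x.isPWO_support y.isPWO_support (c+d) := by
      rw [Finset.mem_antidiagonal]
      refine ⟨?_, ?_, rfl⟩
      · rw [HahnSeries.mem_support]; intro h0; rw [h0, zero_mul] at hne; exact hne rfl
      · rw [HahnSeries.mem_support]; intro h0; rw [h0, mul_zero] at hne; exact hne rfl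
    rw [he] at hcd; simp at hcd
  · rw [he, Finset.sum_singleton]

lemma mul_coeff_lt {x y : HahnSeries ℤ B} {c d : ℤ}
    (hx : x.support ⊆ Set.Ici c) (hy : y.support ⊆ Set.Ici d) {k : ℤ} (hk : k < c + d) :
    (x * y).coeff k = 0 := by
  by_contra h
  obtain ⟨i, hi, j, hj, rfl⟩ := HahnSeries.support_mul_subset
    (HahnSeries.mem_support _ _ |>.2 h)
  have := hx hi; have := hy hj
  simp only [Set.mem_Ici] at *
  omega

lemma support_pow_subset_Iic {x : HahnSeries ℤ B} {c : ℤ}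
    (h : x.support ⊆ Set.Iic c) (m : ℕ) (hm : 1 ≤ m) :
    (x ^ m).support ⊆ Set.Iic ((m : ℤ) * c) := by
  induction m with
  | zero => omega
  | succ m ih =>
      rcases Nat.eq_or_lt_of_le hm with h1 | h1
      · intro k hk
        rw [← h1] at hk ⊢
        simpa using h (by simpa using hk)
      · intro k hk
        rw [pow_succ] at hk
        obtain ⟨i, hi, j, hj, rfl⟩ := HahnSeries.support_mul_subset hk
        have h1' := ih (by omega) hi
        have h2 := h hj
        simp only [Set.mem_Iic] at h1' h2 ⊢
        push_cast
        linarith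

lemma mul_coeff_of_ge {x y : HahnSeries ℤ B} {c d : ℤ}
    (hx : x.support ⊆ Set.Iic c) (hy : y.support ⊆ Set.Iic d) :
    (x * y).coeff (c + d) = x.coeff c * y.coeff d := by
  rw [HahnSeries.coeff_mul]
  have hsub : Finset.antidiagonal x.isPWO_support y.isPWO_support (c + d)
      ⊆ {((c : ℤ), (d : ℤ))} := by
    intro p hp
    rw [Finset.mem_antidiagonal] at hp
    obtain ⟨h1, h2, h3⟩ := hp
    have hc := hx h1
    have hd := hy h2
    simp only [Set.mem_Iic] at hc hd
    simp only [Finset.mem_singleton, Prod.ext_iff]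
    omega
  rcases Finset.subset_singleton_iff.1 hsub with he | he
  · rw [he, Finset.sum_empty]
    by_contra hne
    have hcd : ((c : ℤ), (d : ℤ)) ∈ Finset.antidiagonal x.isPWO_support y.isPWO_support (c+d) := by
      rw [Finset.mem_antidiagonal]
      refine ⟨?_, ?_, rfl⟩
      · rw [HahnSeries.mem_support]; intro h0; rw [h0, zero_mul] at hne; exact hne rfl
      · rw [HahnSeries.mem_support]; intro h0; rw [h0, mul_zero] at hne; exact hne rfl
    rw [he] at hcd; simp at hcd
  · rw [he, Finset.sum_singleton]

lemma mul_coeff_gt {x y : HahnSeries ℤ B} {c d : ℤ}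
    (hx : x.support ⊆ Set.Iic c) (hy : y.support ⊆ Set.Iic d) {k : ℤ} (hk : c + d < k) :
    (x * y).coeff k = 0 := by
  by_contra h
  obtain ⟨i, hi, j, hj, rfl⟩ := HahnSeries.support_mul_subset
    (HahnSeries.mem_support _ _ |>.2 h)
  have := hx hi; have := hy hj
  simp only [Set.mem_Iic] at *
  omega

lemma mul_coeff_mem_left {x y : HahnSeries ℤ B} {I : Ideal B}
    (hx : ∀ i, x.coeff i ∈ I) (k : ℤ) : (x * y).coeff k ∈ I := by
  rw [HahnSeries.coeff_mul]
  exact Ideal.sum_mem I (fun p _ => Ideal.mul_mem_right _ I (hx p.1))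

lemma mul_coeff_mem_mul {x y : HahnSeries ℤ B} {I J : Ideal B}
    (hx : ∀ i, x.coeff i ∈ I) (hy : ∀ j, y.coeff j ∈ J) (k : ℤ) :
    (x * y).coeff k ∈ I * J := by
  rw [HahnSeries.coeff_mul]
  exact Ideal.sum_mem _ (fun p _ => Ideal.mul_mem_mul (hx p.1) (hy p.2))

lemma coeff_pow_min {x : HahnSeries ℤ B} {c : ℤ} (hx : x.support ⊆ Set.Ici c) (m : ℕ) :
    (x ^ m).coeff ((m : ℤ) * c) = (x.coeff c) ^ m := by
  induction m with
  | zero => simp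
  | succ m ih =>
      have : ((m : ℤ) + 1) * c = (m : ℤ) * c + c := by ring
      push_cast
      rw [this, pow_succ, pow_succ, ← ih]
      exact mul_coeff_of_le (support_pow_subset hx m) hx

lemma coeff_isNilpotent {x : HahnSeries ℤ B} (hx : IsNilpotent x) (k : ℤ) :
    IsNilpotent (x.coeff k) := by
  obtain ⟨N, hcard⟩ : ∃ N, (support_inter_Iic_finite x k).toFinset.card = N := ⟨_, rfl⟩
  induction N using Nat.strong_induction_on generalizing x with
  | _ N IH =>
    by_cases h0 : x.coeff k = 0
    · rw [h0]; exact IsNilpotent.zero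
    · have hxne : x ≠ 0 := by intro h; rw [h] at h0; exact h0 rfl
      have hsne : x.support.Nonempty := HahnSeries.support_nonempty_iff.2 hxne
      set c := x.isWF_support.min hsne with hc
      have hmem : c ∈ x.support := x.isWF_support.min_mem hsne
      have hsupp : x.support ⊆ Set.Ici c := fun j hj => x.isWF_support.min_le hsne hj
      have hck : c ≤ k := x.isWF_support.min_le hsne ((x.mem_support k).2 h0)
      have hcnil : IsNilpotent (x.coeff c) := by
        obtain ⟨M, hM⟩ := hx
        exact ⟨M, by rw [← coeff_pow_min hsupp, hM, HahnSeries.coeff_zero]⟩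
      rcases eq_or_lt_of_le hck with rfl | hlt
      · exact hcnil
      · set x' := x - HahnSeries.single c (x.coeff c) with hx'
        have hx'nil : IsNilpotent x' :=
          Commute.isNilpotent_sub (Commute.all _ _) hx (single_nilpotent hcnil)
        have hcoeff' : ∀ j, x'.coeff j = if j = c then 0 else x.coeff j := by
          intro j
          rw [hx', HahnSeries.coeff_sub]
          by_cases hj : j = c <;> simp [hj]
        have hxk : x'.coeff k = x.coeff k := by
          rw [hcoeff' k, if_neg (by omega)]
        have hsubset : (support_inter_Iic_finite x' k).toFinset ⊆
            (support_inter_Iic_finite x k).toFinset := by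
          intro j hj
          simp only [Set.Finite.mem_toFinset, Set.mem_inter_iff, HahnSeries.mem_support] at hj ⊢
          refine ⟨?_, hj.2⟩
          rw [hcoeff' j] at hj
          by_cases hjc : j = c
          · rw [if_pos hjc] at hj; exact absurd rfl hj.1
          · rw [if_neg hjc] at hj; exact hj.1
        have hcnot : c ∉ (support_inter_Iic_finite x' k).toFinset := by
          simp only [Set.Finite.mem_toFinset, Set.mem_inter_iff, HahnSeries.mem_support]
          intro hcon
          rw [hcoeff' c, if_pos rfl] at hcon
          exact hcon.1 rfl
        have hcin : c ∈ (support_inter_Iic_finite x k).toFinset := by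
          simp only [Set.Finite.mem_toFinset, Set.mem_inter_iff]
          exact ⟨hmem, Set.mem_Iic.2 hck⟩
        have hlt' : (support_inter_Iic_finite x' k).toFinset.card < N := by
          rw [← hcard]
          exact Finset.card_lt_card (Finset.ssubset_iff_of_subset hsubset |>.2 ⟨c, hcin, hcnot⟩)
        rw [← hxk]
        exact IH _ hlt' hx'nil rfl

lemma nilpotent_of_neg_support {x : HahnSeries ℤ B} (hs : x.support ⊆ Set.Iio 0)
    (h : ∀ k, IsNilpotent (x.coeff k)) : IsNilpotent x := by
  have hfin : x.support.Finite := by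
    refine (support_inter_Iic_finite x 0).subset ?_
    intro j hj
    exact ⟨hj, Set.mem_Iic.2 (le_of_lt (hs hj))⟩
  have hsub : x.support ⊆ hfin.toFinset := fun j hj => hfin.mem_toFinset.2 hj
  rw [eq_sum_single hsub]
  exact isNilpotent_sum (fun k _ => single_nilpotent (h k))

lemma exists_inv {x : HahnSeries ℤ B} (hs : ∀ k < 0, x.coeff k = 0)
    (hu : IsUnit (x.coeff 0)) :
    ∃ y : HahnSeries ℤ B, x * y = 1 ∧ (∀ k < 0, y.coeff k = 0) ∧
      y.coeff 0 * x.coeff 0 = 1 := by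
  set φ : PowerSeries B := PowerSeries.mk (fun n => x.coeff (n : ℤ)) with hφ
  have hofc : ∀ (ψ : PowerSeries B) (k : ℤ), k < 0 →
      (HahnSeries.ofPowerSeries ℤ B ψ).coeff k = 0 := by
    intro ψ k hk
    rw [HahnSeries.ofPowerSeries_apply]
    apply HahnSeries.embDomain_notin_range
    rintro ⟨n, hn⟩
    have : ((n : ℕ) : ℤ) = k := hn
    omega
  have hrep : x = HahnSeries.ofPowerSeries ℤ B φ := by
    ext k
    rcases lt_or_ge k 0 with hk | hk
    · rw [hs k hk, hofc φ k hk]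
    · obtain ⟨n, rfl⟩ := Int.eq_ofNat_of_zero_le hk
      rw [HahnSeries.ofPowerSeries_apply_coeff, hφ, PowerSeries.coeff_mk]
  have hconst : PowerSeries.constantCoeff φ = x.coeff 0 := by
    rw [hφ]
    have := PowerSeries.coeff_mk 0 (fun n => x.coeff (n : ℤ))
    rw [PowerSeries.coeff_zero_eq_constantCoeff] at this
    simpa using this
  set u := hu.unit with hu'
  have hcu : PowerSeries.constantCoeff φ = (u : B) := by rw [hconst]; exact (hu.unit_spec).symm
  set ψ := PowerSeries.invOfUnit φ u with hψ
  refine ⟨HahnSeries.ofPowerSeries ℤ B ψ, ?_, fun k hk => hofc ψ k hk, ?_⟩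
  · rw [hrep, ← map_mul, PowerSeries.mul_invOfUnit φ u hcu, map_one]
  · have h0 : (HahnSeries.ofPowerSeries ℤ B ψ).coeff ((0 : ℕ) : ℤ) = PowerSeries.coeff 0 ψ :=
      HahnSeries.ofPowerSeries_apply_coeff ψ 0
    simp only [Nat.cast_zero] at h0
    rw [h0]
    have : PowerSeries.coeff 0 ψ = (↑u⁻¹ : B) := by
      rw [hψ, PowerSeries.coeff_zero_eq_constantCoeff, PowerSeries.constantCoeff_invOfUnit]
    rw [this, ← hu.unit_spec]
    exact Units.inv_mul u

/-- strictly negative truncation -/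
def negPart (x : HahnSeries ℤ B) : HahnSeries ℤ B where
  coeff k := if k < 0 then x.coeff k else 0
  isPWO_support' := x.isPWO_support.mono (fun k hk => by
    simp only [Function.mem_support] at hk
    by_cases h : k < 0
    · simp only [if_pos h] at hk; exact hk
    · simp only [if_neg h, ne_eq, not_true_eq_false] at hk)

lemma negPart_coeff (x : HahnSeries ℤ B) (k : ℤ) :
    (negPart x).coeff k = if k < 0 then x.coeff k else 0 := rfl

lemma negPart_support (x : HahnSeries ℤ B) : (negPart x).support ⊆ Set.Iio 0 := by
  intro k hk
  rw [HahnSeries.mem_support, negPart_coeff] at hk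
  by_contra h
  simp only [Set.mem_Iio] at h
  rw [if_neg h] at hk
  exact hk rfl

end HahnAux

section IterStuff
variable {A : Type} [CommRing A]

lemma down_mul {n : ℕ} (f g : IterLaurent A (n+1)) : (f*g).down = f.down * g.down := rfl
lemma down_add {n : ℕ} (f g : IterLaurent A (n+1)) : (f+g).down = f.down + g.down := rfl
lemma down_one {n : ℕ} : (1 : IterLaurent A (n+1)).down = 1 := rfl
lemma down_zero {n : ℕ} : (0 : IterLaurent A (n+1)).down = 0 := rfl
lemma down_sub {n : ℕ} (f g : IterLaurent A (n+1)) : (f-g).down = f.down - g.down := rfl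
lemma down_inj {n : ℕ} {f g : IterLaurent A (n+1)} (h : f.down = g.down) : f = g := h

lemma nilp_down {n : ℕ} {f : IterLaurent A (n+1)} :
    IsNilpotent f ↔ IsNilpotent f.down :=
  ⟨fun ⟨m, hm⟩ => ⟨m, show f.down ^ m = 0 from congrArg IterLaurent.down hm⟩,
   fun ⟨m, hm⟩ => ⟨m, show f ^ m = 0 from hm⟩⟩

lemma iterCoeff_succ {n : ℕ} (f : IterLaurent A (n+1)) (l : Fin (n+1) → ℤ) :
    iterCoeff A f l = iterCoeff A (f.down.coeff (l (Fin.last n))) (fun i => l i.castSucc) := rfl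

lemma lexLt_succ {n : ℕ} (l l' : Fin (n+1) → ℤ) :
    lexLt l l' ↔ (l (Fin.last n) < l' (Fin.last n) ∨ (l (Fin.last n) = l' (Fin.last n) ∧
      lexLt (fun i => l i.castSucc) (fun i => l' i.castSucc))) := Iff.rfl

lemma zero_last {n : ℕ} : (0 : Fin (n+1) → ℤ) (Fin.last n) = 0 := rfl
lemma zero_tail {n : ℕ} : (fun i : Fin n => (0 : Fin (n+1) → ℤ) i.castSucc) = (0 : Fin n → ℤ) := rfl

lemma eq_zero_iff_snoc {n : ℕ} (l : Fin (n+1) → ℤ) :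
    l = 0 ↔ (l (Fin.last n) = 0 ∧ (fun i : Fin n => l i.castSucc) = 0) := by
  constructor
  · rintro rfl; exact ⟨rfl, rfl⟩
  · rintro ⟨h1, h2⟩
    funext i
    induction i using Fin.lastCases with
    | last => exact h1
    | cast j => exact congrFun h2 j

lemma iterCoeff_zero' {n : ℕ} (l : Fin n → ℤ) : iterCoeff A (0 : IterLaurent A n) l = 0 := by
  induction n with
  | zero => rfl
  | succ n ih =>
      rw [iterCoeff_succ]
      rw [show (0 : IterLaurent A (n+1)).down = 0 from rfl, HahnSeries.coeff_zero]
      exact ih _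

lemma iterCoeff_add {n : ℕ} (f g : IterLaurent A n) (l : Fin n → ℤ) :
    iterCoeff A (f + g) l = iterCoeff A f l + iterCoeff A g l := by
  induction n with
  | zero => rfl
  | succ n ih =>
      rw [iterCoeff_succ, iterCoeff_succ, iterCoeff_succ, down_add, HahnSeries.coeff_add]
      exact ih _ _ _

lemma iterCoeff_neg {n : ℕ} (f : IterLaurent A n) (l : Fin n → ℤ) :
    iterCoeff A (-f) l = - iterCoeff A f l := by
  have := iterCoeff_add (-f) f l
  rw [neg_add_cancel] at this
  rw [iterCoeff_zero'] at this
  exact eq_neg_of_add_eq_zero_left this.symm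

lemma iterCoeff_sub {n : ℕ} (f g : IterLaurent A n) (l : Fin n → ℤ) :
    iterCoeff A (f - g) l = iterCoeff A f l - iterCoeff A g l := by
  rw [sub_eq_add_neg, iterCoeff_add, iterCoeff_neg, sub_eq_add_neg]

lemma iterCoeff_one {n : ℕ} (l : Fin n → ℤ) :
    iterCoeff A (1 : IterLaurent A n) l = if l = 0 then 1 else 0 := by
  induction n with
  | zero =>
      have : l = 0 := Subsingleton.elim _ _
      simp [this]
      rfl
  | succ n ih =>
      rw [iterCoeff_succ, down_one, HahnSeries.coeff_one]
      by_cases h : l (Fin.last n) = 0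
      · rw [if_pos h, ih]
        by_cases h2 : (fun i : Fin n => l i.castSucc) = 0
        · rw [if_pos h2, if_pos ((eq_zero_iff_snoc l).2 ⟨h, h2⟩)]
        · rw [if_neg h2, if_neg (fun hc => h2 (((eq_zero_iff_snoc l).1 hc).2))]
      · rw [if_neg h, iterCoeff_zero', if_neg (fun hc => h (((eq_zero_iff_snoc l).1 hc).1))]

lemma iterCoeff_nilpotent {n : ℕ} {f : IterLaurent A n} (hf : IsNilpotent f) (l : Fin n → ℤ) :
    IsNilpotent (iterCoeff A f l) := by
  induction n with
  | zero => exact hf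
  | succ n ih =>
      rw [iterCoeff_succ]
      exact ih (HahnAux.coeff_isNilpotent (nilp_down.1 hf) _) _

lemma iterC_succ {n : ℕ} (a : A) :
    iterC A (n+1) a = IterLaurent.up (HahnSeries.C (iterC A n a)) := rfl

lemma iterCoeff_C_mul {n : ℕ} (a : A) (f : IterLaurent A n) (l : Fin n → ℤ) :
    iterCoeff A (iterC A n a * f) l = a * iterCoeff A f l := by
  induction n with
  | zero => rfl
  | succ n ih =>
      rw [iterCoeff_succ, iterCoeff_succ]
      have hd : (iterC A (n+1) a * f).down = HahnSeries.C (iterC A n a) * f.down := rfl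
      rw [hd]
      have : (HahnSeries.C (iterC A n a) * f.down).coeff (l (Fin.last n))
          = iterC A n a * f.down.coeff (l (Fin.last n)) := by
        rw [HahnSeries.C_apply, HahnSeries.coeff_single_zero_mul]
      rw [this, ih]

lemma iter_ext_zero {n : ℕ} {f : IterLaurent A n} (h : ∀ l, iterCoeff A f l = 0) : f = 0 := by
  induction n with
  | zero => exact h default
  | succ n ih =>
      apply down_inj
      rw [down_zero]
      ext k
      rw [HahnSeries.coeff_zero]
      apply ih
      intro l'
      have := h (Fin.snoc l' k)
      rw [iterCoeff_succ] at this
      simpa [Fin.snoc_last, Fin.snoc_castSucc] using this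

/-- all coefficients at `l < 0` (lex) vanish -/
def NonnegS {A : Type} [CommRing A] : {n : ℕ} → IterLaurent A n → Prop
  | 0, _ => True
  | _+1, f => (∀ k < 0, f.down.coeff k = 0) ∧ NonnegS (f.down.coeff 0)

/-- all coefficients at `l > 0` (lex) vanish -/
def NonposS {A : Type} [CommRing A] : {n : ℕ} → IterLaurent A n → Prop
  | 0, _ => True
  | _+1, f => (∀ k > 0, f.down.coeff k = 0) ∧ NonposS (f.down.coeff 0)

/-- all coefficients at `l ≥ 0` (lex) vanish -/
def NegS {A : Type} [CommRing A] : {n : ℕ} → IterLaurent A n → Prop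
  | 0, f => f = 0
  | _+1, f => (∀ k > 0, f.down.coeff k = 0) ∧ NegS (f.down.coeff 0)

lemma nonnegS_iff {n : ℕ} (f : IterLaurent A n) :
    NonnegS f ↔ ∀ l, lexLt l 0 → iterCoeff A f l = 0 := by
  induction n with
  | zero => exact ⟨fun _ l hl => absurd hl (by exact not_false), fun _ => trivial⟩
  | succ n ih =>
      constructor
      · rintro ⟨h1, h2⟩ l hl
        rw [iterCoeff_succ]
        rcases (lexLt_succ l 0).1 hl with h | ⟨he, ht⟩
        · rw [zero_last] at h
          rw [h1 _ h]
          exact iterCoeff_zero' _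
        · rw [zero_last] at he
          rw [he]
          exact (ih _).1 h2 _ (by rwa [zero_tail] at ht)
      · intro h
        constructor
        · intro k hk
          apply iter_ext_zero
          intro l'
          have := h (Fin.snoc l' k) ((lexLt_succ _ _).2 (Or.inl (by rw [Fin.snoc_last, zero_last]; exact hk)))
          rw [iterCoeff_succ, Fin.snoc_last] at this
          rwa [show (fun i : Fin n => (Fin.snoc l' k : Fin (n+1) → ℤ) i.castSucc) = l' from
            funext fun i => by simp] at this
        · apply (ih _).2
          intro l' hl'
          have := h (Fin.snoc l' 0) ((lexLt_succ _ _).2 (Or.inr ⟨by rw [Fin.snoc_last, zero_last],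
            by rw [zero_tail, show (fun i : Fin n => (Fin.snoc l' (0:ℤ) : Fin (n+1) → ℤ) i.castSucc) = l' from
              funext fun i => by simp]; exact hl'⟩))
          rw [iterCoeff_succ, Fin.snoc_last] at this
          rwa [show (fun i : Fin n => (Fin.snoc l' (0:ℤ) : Fin (n+1) → ℤ) i.castSucc) = l' from
            funext fun i => by simp] at this

lemma nonposS_iff {n : ℕ} (f : IterLaurent A n) :
    NonposS f ↔ ∀ l, lexLt 0 l → iterCoeff A f l = 0 := by
  induction n with
  | zero => exact ⟨fun _ l hl => absurd hl (by exact not_false), fun _ => trivial⟩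
  | succ n ih =>
      constructor
      · rintro ⟨h1, h2⟩ l hl
        rw [iterCoeff_succ]
        rcases (lexLt_succ 0 l).1 hl with h | ⟨he, ht⟩
        · rw [zero_last] at h
          rw [h1 _ h]
          exact iterCoeff_zero' _
        · rw [zero_last] at he
          rw [← he]
          exact (ih _).1 h2 _ (by rwa [zero_tail] at ht)
      · intro h
        constructor
        · intro k hk
          apply iter_ext_zero
          intro l'
          have := h (Fin.snoc l' k) ((lexLt_succ _ _).2 (Or.inl (by rw [Fin.snoc_last, zero_last]; exact hk)))
          rw [iterCoeff_succ, Fin.snoc_last] at this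
          rwa [show (fun i : Fin n => (Fin.snoc l' k : Fin (n+1) → ℤ) i.castSucc) = l' from
            funext fun i => by simp] at this
        · apply (ih _).2
          intro l' hl'
          have := h (Fin.snoc l' 0) ((lexLt_succ _ _).2 (Or.inr ⟨by rw [Fin.snoc_last, zero_last],
            by rw [zero_tail, show (fun i : Fin n => (Fin.snoc l' (0:ℤ) : Fin (n+1) → ℤ) i.castSucc) = l' from
              funext fun i => by simp]; exact hl'⟩))
          rw [iterCoeff_succ, Fin.snoc_last] at this
          rwa [show (fun i : Fin n => (Fin.snoc l' (0:ℤ) : Fin (n+1) → ℤ) i.castSucc) = l' from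
            funext fun i => by simp] at this

lemma nonnegS_one {n : ℕ} : NonnegS (1 : IterLaurent A n) := by
  induction n with
  | zero => trivial
  | succ n ih =>
      refine ⟨fun k hk => ?_, ?_⟩
      · rw [down_one, HahnSeries.coeff_one, if_neg (by omega)]
      · rw [down_one, HahnSeries.coeff_one, if_pos rfl]
        exact ih

lemma nonposS_one {n : ℕ} : NonposS (1 : IterLaurent A n) := by
  induction n with
  | zero => trivial
  | succ n ih =>
      refine ⟨fun k hk => ?_, ?_⟩
      · rw [down_one, HahnSeries.coeff_one, if_neg (by omega)]
      · rw [down_one, HahnSeries.coeff_one, if_pos rfl]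
        exact ih

lemma nonnegS_add {n : ℕ} {f g : IterLaurent A n} (hf : NonnegS f) (hg : NonnegS g) :
    NonnegS (f + g) := by
  induction n with
  | zero => trivial
  | succ n ih =>
      refine ⟨fun k hk => ?_, ?_⟩
      · rw [down_add, HahnSeries.coeff_add, hf.1 k hk, hg.1 k hk, add_zero]
      · rw [down_add, HahnSeries.coeff_add]
        exact ih hf.2 hg.2

lemma nonposS_add {n : ℕ} {f g : IterLaurent A n} (hf : NonposS f) (hg : NonposS g) :
    NonposS (f + g) := by
  induction n with
  | zero => trivial
  | succ n ih =>
      refine ⟨fun k hk => ?_, ?_⟩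
      · rw [down_add, HahnSeries.coeff_add, hf.1 k hk, hg.1 k hk, add_zero]
      · rw [down_add, HahnSeries.coeff_add]
        exact ih hf.2 hg.2

lemma negS_add {n : ℕ} {f g : IterLaurent A n} (hf : NegS f) (hg : NegS g) :
    NegS (f + g) := by
  induction n with
  | zero => show f + g = 0; rw [show f = 0 from hf, show g = 0 from hg, add_zero]
  | succ n ih =>
      refine ⟨fun k hk => ?_, ?_⟩
      · rw [down_add, HahnSeries.coeff_add, hf.1 k hk, hg.1 k hk, add_zero]
      · rw [down_add, HahnSeries.coeff_add]
        exact ih hf.2 hg.2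

lemma negS_nonposS {n : ℕ} {f : IterLaurent A n} (hf : NegS f) : NonposS f := by
  induction n with
  | zero => trivial
  | succ n ih => exact ⟨hf.1, ih hf.2⟩

lemma negS_coeff0 {n : ℕ} {f : IterLaurent A n} (hf : NegS f) : iterCoeff A f 0 = 0 := by
  induction n with
  | zero => exact hf
  | succ n ih =>
      rw [iterCoeff_succ, zero_last, zero_tail]
      exact ih hf.2

lemma supp_Ici {x : HahnSeries ℤ (IterLaurent A n)} (h : ∀ k < 0, x.coeff k = 0) :
    x.support ⊆ Set.Ici 0 := by
  intro k hk
  rw [HahnSeries.mem_support] at hk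
  by_contra hc
  exact hk (h k (by simpa using hc))

lemma supp_Iic {x : HahnSeries ℤ (IterLaurent A n)} (h : ∀ k > 0, x.coeff k = 0) :
    x.support ⊆ Set.Iic 0 := by
  intro k hk
  rw [HahnSeries.mem_support] at hk
  by_contra hc
  exact hk (h k (by simpa using hc))

lemma nonnegS_mul {n : ℕ} {f g : IterLaurent A n} (hf : NonnegS f) (hg : NonnegS g) :
    NonnegS (f * g) := by
  induction n with
  | zero => trivial
  | succ n ih =>
      refine ⟨fun k hk => ?_, ?_⟩
      · rw [down_mul]
        exact HahnAux.mul_coeff_lt (supp_Ici hf.1) (supp_Ici hg.1) (by omega)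
      · rw [down_mul]
        have : (f.down * g.down).coeff 0 = f.down.coeff 0 * g.down.coeff 0 := by
          have := HahnAux.mul_coeff_of_le (supp_Ici hf.1) (supp_Ici hg.1)
          simpa using this
        rw [this]
        exact ih hf.2 hg.2

lemma nonposS_mul {n : ℕ} {f g : IterLaurent A n} (hf : NonposS f) (hg : NonposS g) :
    NonposS (f * g) := by
  induction n with
  | zero => trivial
  | succ n ih =>
      refine ⟨fun k hk => ?_, ?_⟩
      · rw [down_mul]
        exact HahnAux.mul_coeff_gt (supp_Iic hf.1) (supp_Iic hg.1) (by omega)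
      · rw [down_mul]
        have : (f.down * g.down).coeff 0 = f.down.coeff 0 * g.down.coeff 0 := by
          have := HahnAux.mul_coeff_of_ge (supp_Iic hf.1) (supp_Iic hg.1)
          simpa using this
        rw [this]
        exact ih hf.2 hg.2

lemma negS_mul {n : ℕ} {f g : IterLaurent A n} (hf : NegS f) (hg : NegS g) :
    NegS (f * g) := by
  induction n with
  | zero => show f * g = 0; rw [show f = 0 from hf, zero_mul]
  | succ n ih =>
      refine ⟨fun k hk => ?_, ?_⟩
      · rw [down_mul]
        exact HahnAux.mul_coeff_gt (supp_Iic hf.1) (supp_Iic hg.1) (by omega)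
      · rw [down_mul]
        have : (f.down * g.down).coeff 0 = f.down.coeff 0 * g.down.coeff 0 := by
          have := HahnAux.mul_coeff_of_ge (supp_Iic hf.1) (supp_Iic hg.1)
          simpa using this
        rw [this]
        exact ih hf.2 hg.2

lemma coeff0_mul_nonneg {n : ℕ} {f g : IterLaurent A n} (hf : NonnegS f) (hg : NonnegS g) :
    iterCoeff A (f * g) 0 = iterCoeff A f 0 * iterCoeff A g 0 := by
  induction n with
  | zero => rfl
  | succ n ih =>
      rw [iterCoeff_succ, iterCoeff_succ, iterCoeff_succ, zero_last, zero_tail, down_mul]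
      have : (f.down * g.down).coeff 0 = f.down.coeff 0 * g.down.coeff 0 := by
        have := HahnAux.mul_coeff_of_le (supp_Ici hf.1) (supp_Ici hg.1)
        simpa using this
      rw [this]
      exact ih hf.2 hg.2

lemma coeff0_mul_nonpos {n : ℕ} {f g : IterLaurent A n} (hf : NonposS f) (hg : NonposS g) :
    iterCoeff A (f * g) 0 = iterCoeff A f 0 * iterCoeff A g 0 := by
  induction n with
  | zero => rfl
  | succ n ih =>
      rw [iterCoeff_succ, iterCoeff_succ, iterCoeff_succ, zero_last, zero_tail, down_mul]
      have : (f.down * g.down).coeff 0 = f.down.coeff 0 * g.down.coeff 0 := by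
        have := HahnAux.mul_coeff_of_ge (supp_Iic hf.1) (supp_Iic hg.1)
        simpa using this
      rw [this]
      exact ih hf.2 hg.2

lemma nonnegS_C {n : ℕ} (a : A) : NonnegS (iterC A n a) := by
  induction n with
  | zero => trivial
  | succ n ih =>
      refine ⟨fun k hk => ?_, ?_⟩
      · show (HahnSeries.C (iterC A n a)).coeff k = 0
        rw [HahnSeries.C_apply, HahnSeries.coeff_single_of_ne (by omega)]
      · show NonnegS ((HahnSeries.C (iterC A n a)).coeff 0)
        rw [HahnSeries.C_apply, HahnSeries.coeff_single_same]
        exact ih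

lemma iterCoeff_C0 {n : ℕ} (a : A) : iterCoeff A (iterC A n a) 0 = a := by
  have := iterCoeff_C_mul (n := n) a 1 0
  rw [mul_one, iterCoeff_one, if_pos rfl, mul_one] at this
  exact this

lemma truncNeg_coeff {n : ℕ} (f : IterLaurent A (n+1)) (k : ℤ) :
    (truncNeg A f).down.coeff k =
      if k < 0 then f.down.coeff k else if k = 0 then truncNeg A (f.down.coeff 0) else 0 := rfl

lemma truncNeg_add {n : ℕ} (f g : IterLaurent A n) :
    truncNeg A (f + g) = truncNeg A f + truncNeg A g := by
  induction n with
  | zero => show (0 : A) = 0 + 0; rw [add_zero]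
  | succ n ih =>
      apply down_inj
      rw [down_add]
      ext k
      rw [HahnSeries.coeff_add, truncNeg_coeff, truncNeg_coeff, truncNeg_coeff, down_add,
        HahnSeries.coeff_add]
      rcases lt_trichotomy k 0 with h | h | h
      · simp only [if_pos h]
      · simp only [h, lt_irrefl, if_neg (lt_irrefl (0:ℤ)), if_pos rfl]
        exact ih _ _
      · simp only [if_neg (not_lt.2 h.le), if_neg (by omega : ¬ k = 0), add_zero]

lemma truncNeg_sub {n : ℕ} (f g : IterLaurent A n) :
    truncNeg A (f - g) = truncNeg A f - truncNeg A g := by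
  have h := truncNeg_add (f - g) g
  rw [sub_add_cancel] at h
  rw [h]; ring

lemma truncNeg_eq_zero {n : ℕ} {f : IterLaurent A n} (hf : NonnegS f) :
    truncNeg A f = 0 := by
  induction n with
  | zero => rfl
  | succ n ih =>
      apply down_inj
      rw [down_zero]
      ext k
      rw [HahnSeries.coeff_zero, truncNeg_coeff]
      rcases lt_trichotomy k 0 with h | h | h
      · rw [if_pos h]; exact hf.1 k h
      · rw [if_neg (by omega), if_pos h]
        exact ih hf.2
      · rw [if_neg (by omega), if_neg (by omega)]

lemma nonnegS_sub_truncNeg {n : ℕ} (f : IterLaurent A n) :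
    NonnegS (f - truncNeg A f) := by
  induction n with
  | zero => trivial
  | succ n ih =>
      refine ⟨fun k hk => ?_, ?_⟩
      · rw [down_sub, HahnSeries.coeff_sub, truncNeg_coeff, if_pos hk, sub_self]
      · rw [down_sub, HahnSeries.coeff_sub, truncNeg_coeff, if_neg (lt_irrefl 0), if_pos rfl]
        exact ih _

lemma truncNeg_coeff0 {n : ℕ} (f : IterLaurent A n) :
    iterCoeff A (truncNeg A f) 0 = 0 := by
  induction n with
  | zero => rfl
  | succ n ih =>
      rw [iterCoeff_succ, zero_last, zero_tail, truncNeg_coeff, if_neg (lt_irrefl 0), if_pos rfl]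
      exact ih _

lemma negS_truncNeg {n : ℕ} (f : IterLaurent A n) : NegS (truncNeg A f) := by
  induction n with
  | zero => rfl
  | succ n ih =>
      refine ⟨fun k hk => ?_, ?_⟩
      · rw [truncNeg_coeff, if_neg (by omega), if_neg (by omega)]
      · rw [truncNeg_coeff, if_neg (lt_irrefl 0), if_pos rfl]
        exact ih _

lemma truncNeg_nilpotent {n : ℕ} {f : IterLaurent A n} (hf : IsNilpotent f) :
    IsNilpotent (truncNeg A f) := by
  induction n with
  | zero => exact IsNilpotent.zero
  | succ n ih =>
      have hfd : IsNilpotent f.down := nilp_down.1 hf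
      set u : IterLaurent A (n+1) :=
        IterLaurent.up (HahnSeries.single 0 (truncNeg A (f.down.coeff 0))) with hu
      have hdecomp : truncNeg A f = (truncNeg A f - u) + u := by ring
      have hvnil : IsNilpotent (truncNeg A f - u) := by
        rw [nilp_down]
        apply HahnAux.nilpotent_of_neg_support
        · intro k hk
          rw [HahnSeries.mem_support] at hk
          rw [Set.mem_Iio]
          by_contra hc
          apply hk
          rw [down_sub, HahnSeries.coeff_sub, truncNeg_coeff, if_neg (by omega)]
          show _ - (HahnSeries.single 0 (truncNeg A (f.down.coeff 0))).coeff k = 0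
          by_cases h0 : k = 0
          · rw [if_pos h0, h0, HahnSeries.coeff_single_same, sub_self]
          · rw [if_neg h0, HahnSeries.coeff_single_of_ne h0, sub_zero]
        · intro k
          rw [down_sub, HahnSeries.coeff_sub, truncNeg_coeff]
          rcases lt_trichotomy k 0 with h | h | h
          · rw [if_pos h]
            show IsNilpotent (f.down.coeff k - (HahnSeries.single 0 _).coeff k)
            rw [HahnSeries.coeff_single_of_ne (by omega), sub_zero]
            exact HahnAux.coeff_isNilpotent hfd k
          · rw [if_neg (by omega), if_pos h]
            show IsNilpotent (truncNeg A (f.down.coeff 0) - (HahnSeries.single 0 _).coeff k)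
            rw [h, HahnSeries.coeff_single_same, sub_self]
            exact IsNilpotent.zero
          · rw [if_neg (by omega), if_neg (by omega)]
            show IsNilpotent ((0:IterLaurent A n) - (HahnSeries.single 0 _).coeff k)
            rw [HahnSeries.coeff_single_of_ne (by omega), sub_zero]
            exact IsNilpotent.zero
      have hunil : IsNilpotent u := by
        rw [nilp_down]
        exact HahnAux.single_nilpotent (ih (HahnAux.coeff_isNilpotent hfd 0))
      rw [hdecomp]
      exact Commute.isNilpotent_add (Commute.all _ _) hvnil hunil

lemma memVplus_iff {n : ℕ} (f : IterLaurent A n) :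
    MemVplus A f ↔ NonnegS f ∧ iterCoeff A f 0 = 1 := by
  rw [MemVplus, nonnegS_iff]
  tauto

lemma memVminus_iff {n : ℕ} (f : IterLaurent A n) :
    MemVminus A f ↔ NonposS f ∧ iterCoeff A f 0 = 1 ∧ IsNilpotent (f - 1) := by
  rw [MemVminus, nonposS_iff]
  tauto

lemma memVplus_one {n : ℕ} : MemVplus A (1 : IterLaurent A n) :=
  (memVplus_iff 1).2 ⟨nonnegS_one, by rw [iterCoeff_one, if_pos rfl]⟩

lemma memVminus_one {n : ℕ} : MemVminus A (1 : IterLaurent A n) :=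
  (memVminus_iff 1).2 ⟨nonposS_one, by rw [iterCoeff_one, if_pos rfl], by
    rw [sub_self]; exact IsNilpotent.zero⟩

lemma memVplus_mul {n : ℕ} {f g : IterLaurent A n} (hf : MemVplus A f) (hg : MemVplus A g) :
    MemVplus A (f * g) := by
  rw [memVplus_iff] at *
  exact ⟨nonnegS_mul hf.1 hg.1, by rw [coeff0_mul_nonneg hf.1 hg.1, hf.2, hg.2, mul_one]⟩

lemma memVminus_mul {n : ℕ} {f g : IterLaurent A n} (hf : MemVminus A f) (hg : MemVminus A g) :
    MemVminus A (f * g) := by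
  rw [memVminus_iff] at *
  refine ⟨nonposS_mul hf.1 hg.1, by rw [coeff0_mul_nonpos hf.1 hg.1, hf.2.1, hg.2.1, mul_one], ?_⟩
  have : f * g - 1 = (f - 1) * (g - 1) + (f - 1) + (g - 1) := by ring
  rw [this]
  exact Commute.isNilpotent_add (Commute.all _ _)
    (Commute.isNilpotent_add (Commute.all _ _)
      (Commute.isNilpotent_mul_right (Commute.all _ _) hf.2.2) hf.2.2) hg.2.2

lemma negS_of_vminus {n : ℕ} {f : IterLaurent A n} (h1 : NonposS f)
    (h2 : iterCoeff A f 0 = 1) : NegS (f - 1) := by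
  induction n with
  | zero => show f - 1 = 0; rw [show f = 1 from h2, sub_self]
  | succ n ih =>
      refine ⟨fun k hk => ?_, ?_⟩
      · rw [down_sub, HahnSeries.coeff_sub, down_one, HahnSeries.coeff_one, if_neg (by omega),
          h1.1 k hk, sub_zero]
      · rw [down_sub, HahnSeries.coeff_sub, down_one, HahnSeries.coeff_one, if_pos rfl]
        apply ih h1.2
        rw [iterCoeff_succ, zero_last, zero_tail] at h2
        exact h2

lemma exists_inv_iter {n : ℕ} {s : IterLaurent A n} (h1 : NonnegS s)
    (h2 : IsUnit (iterCoeff A s 0)) :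
    ∃ y : IterLaurent A n, s * y = 1 ∧ NonnegS y ∧
      iterCoeff A y 0 * iterCoeff A s 0 = 1 := by
  induction n with
  | zero =>
      obtain ⟨u, hu⟩ := h2
      refine ⟨(show IterLaurent A 0 from (↑u⁻¹ : A)), ?_, trivial, ?_⟩
      · have : (iterCoeff A s 0) * (↑u⁻¹ : A) = 1 := by rw [← hu]; exact u.mul_inv
        exact this
      · have : (↑u⁻¹ : A) * iterCoeff A s 0 = 1 := by rw [← hu]; exact u.inv_mul
        exact this
  | succ n ih =>
      have h20 : IsUnit (iterCoeff A (s.down.coeff 0) 0) := h2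
      obtain ⟨z, hz1, hz2, hz3⟩ := ih h1.2 h20
      have hs0 : IsUnit (s.down.coeff 0) := IsUnit.of_mul_eq_one z hz1
      obtain ⟨y', hy1, hy2, hy3⟩ := HahnAux.exists_inv h1.1 hs0
      have hy0z : y'.coeff 0 = z := by
        have : y'.coeff 0 * (s.down.coeff 0 * z) = y'.coeff 0 := by rw [hz1, mul_one]
        calc y'.coeff 0 = y'.coeff 0 * (s.down.coeff 0 * z) := this.symm
          _ = (y'.coeff 0 * s.down.coeff 0) * z := by ring
          _ = z := by rw [hy3, one_mul]
      refine ⟨IterLaurent.up y', down_inj ?_, ⟨hy2, ?_⟩, ?_⟩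
      · rw [down_mul, down_one]
        exact hy1
      · show NonnegS (y'.coeff 0)
        rw [hy0z]; exact hz2
      · show iterCoeff A (y'.coeff 0) 0 * iterCoeff A (s.down.coeff 0) 0 = 1
        rw [hy0z]; exact hz3

lemma isUnit_of_P {n : ℕ} {f : IterLaurent A n} (h1 : IsUnit (iterCoeff A f 0))
    (h2 : IsNilpotent (truncNeg A f)) : IsUnit f := by
  set s := f - truncNeg A f with hs
  have hns : NonnegS s := nonnegS_sub_truncNeg f
  have hcs : iterCoeff A s 0 = iterCoeff A f 0 := by
    rw [hs, iterCoeff_sub, truncNeg_coeff0, sub_zero]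
  obtain ⟨y, hy1, _, _⟩ := exists_inv_iter hns (hcs ▸ h1)
  have hfe : f = s * (1 + y * truncNeg A f) := by
    have : s * (1 + y * truncNeg A f) = s + (s * y) * truncNeg A f := by ring
    rw [this, hy1, one_mul, hs]; ring
  rw [hfe]
  exact (IsUnit.of_mul_eq_one (a := s) y hy1).mul
    (IsNilpotent.isUnit_one_add (Commute.isNilpotent_mul_left (Commute.all _ _) h2))

lemma level {n : ℕ} (N : ℕ) : ∀ (I : Ideal (IterLaurent A n)), I ^ N = ⊥ →
    ∀ f : IterLaurent A (n+1), IsUnit (f.down.coeff 0) →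
    (∀ k < 0, f.down.coeff k ∈ I) →
    ∃ (b : IterLaurent A n) (p μ : IterLaurent A (n+1)),
      IsUnit b ∧ (∀ k < 0, p.down.coeff k = 0) ∧ p.down.coeff 0 = 1 ∧
      (∀ k, 0 ≤ k → μ.down.coeff k = 0) ∧ IsNilpotent μ ∧
      f = IterLaurent.up (HahnSeries.C b) * p * (1 + μ) := by
  induction N using Nat.strong_induction_on with
  | _ N IH =>
    match N with
    | 0 =>
        intro I hI f _ _
        have h10 : (1 : IterLaurent A n) = 0 := by
          have : (1 : IterLaurent A n) ∈ I ^ 0 := by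
            rw [pow_zero, Ideal.one_eq_top]; exact Submodule.mem_top
          rw [hI] at this
          exact Ideal.mem_bot.1 this
        haveI : Subsingleton (IterLaurent A n) := subsingleton_of_zero_eq_one h10.symm
        haveI : Subsingleton (HahnSeries ℤ (IterLaurent A n)) :=
          ⟨fun a b => by ext; exact Subsingleton.elim _ _⟩
        refine ⟨1, 1, 0, isUnit_one, ?_, ?_, ?_, IsNilpotent.zero, down_inj (Subsingleton.elim _ _)⟩
        · intro k hk; rw [down_one, HahnSeries.coeff_one, if_neg (by omega)]
        · rw [down_one, HahnSeries.coeff_one, if_pos rfl]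
        · intro k hk; rw [down_zero, HahnSeries.coeff_zero]
    | 1 =>
        intro I hI f hf0 hfneg
        rw [pow_one] at hI
        obtain ⟨u, hu⟩ := hf0
        refine ⟨↑u, IterLaurent.up (HahnSeries.C (↑u⁻¹ : IterLaurent A n)) * f, 0,
          u.isUnit, ?_, ?_, ?_, IsNilpotent.zero, ?_⟩
        · intro k hk
          have : (HahnSeries.C (↑u⁻¹ : IterLaurent A n) * f.down).coeff k
              = ↑u⁻¹ * f.down.coeff k := by
            rw [HahnSeries.C_apply, HahnSeries.coeff_single_zero_mul]
          rw [down_mul] at *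
          rw [show (IterLaurent.up (HahnSeries.C (↑u⁻¹ : IterLaurent A n))).down
            = HahnSeries.C (↑u⁻¹ : IterLaurent A n) from rfl, this]
          have hz : f.down.coeff k = 0 := by
            have := hfneg k hk
            rw [hI] at this
            exact Ideal.mem_bot.1 this
          rw [hz, mul_zero]
        · have : (HahnSeries.C (↑u⁻¹ : IterLaurent A n) * f.down).coeff 0
              = ↑u⁻¹ * f.down.coeff 0 := by
            rw [HahnSeries.C_apply, HahnSeries.coeff_single_zero_mul]
          rw [down_mul, show (IterLaurent.up (HahnSeries.C (↑u⁻¹ : IterLaurent A n))).down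
            = HahnSeries.C (↑u⁻¹ : IterLaurent A n) from rfl, this, ← hu]
          exact u.inv_mul
        · intro k hk
          rw [down_zero, HahnSeries.coeff_zero]
        · apply down_inj
          show f.down = (HahnSeries.C (↑u : IterLaurent A n) : HahnSeries ℤ (IterLaurent A n)) *
            ((HahnSeries.C (↑u⁻¹ : IterLaurent A n) : HahnSeries ℤ (IterLaurent A n)) * f.down)
            * (1 + 0)
          rw [add_zero, mul_one, ← mul_assoc, ← map_mul, Units.mul_inv, map_one, one_mul]
    | (M+2) =>
        intro I hI f hf0 hfneg
        have hnil : ∀ x ∈ I, IsNilpotent x := by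
          intro x hx
          refine ⟨M+2, ?_⟩
          have := Ideal.pow_mem_pow hx (M+2)
          rw [hI] at this
          exact Ideal.mem_bot.1 this
        obtain ⟨u, hu⟩ := hf0
        set fd := f.down with hfd
        set np := HahnAux.negPart fd with hnp
        have hnpI : ∀ k, np.coeff k ∈ I := by
          intro k
          rw [hnp, HahnAux.negPart_coeff]
          by_cases h : k < 0
          · rw [if_pos h]; exact hfneg k h
          · rw [if_neg h]; exact I.zero_mem
        set sd := fd - np with hsd
        have hsd_neg : ∀ k < 0, sd.coeff k = 0 := by
          intro k hk
          rw [hsd, HahnSeries.coeff_sub, hnp, HahnAux.negPart_coeff, if_pos hk, sub_self]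
        have hsd0 : sd.coeff 0 = fd.coeff 0 := by
          rw [hsd, HahnSeries.coeff_sub, hnp, HahnAux.negPart_coeff, if_neg (lt_irrefl 0), sub_zero]
        obtain ⟨yd, hy1, hy2, hy3⟩ := HahnAux.exists_inv hsd_neg
          (by rw [hsd0]; exact ⟨u, hu⟩)
        set εd := np * yd with hεd
        have hεI : ∀ k, εd.coeff k ∈ I := fun k => HahnAux.mul_coeff_mem_left hnpI k
        have hfd_eq : fd = sd * (1 + εd) := by
          have h1 : sd * (1 + εd) = sd + np * (sd * yd) := by rw [hεd]; ring
          rw [h1, hy1, mul_one, hsd]; ring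
        set ε1 := HahnAux.negPart εd with hε1
        have hε1I : ∀ k, ε1.coeff k ∈ I := by
          intro k
          rw [hε1, HahnAux.negPart_coeff]
          by_cases h : k < 0
          · rw [if_pos h]; exact hεI k
          · rw [if_neg h]; exact I.zero_mem
        have hε1nil : IsNilpotent ε1 :=
          HahnAux.nilpotent_of_neg_support (HahnAux.negPart_support εd)
            (fun k => hnil _ (hε1I k))
        obtain ⟨v, hv⟩ := (IsNilpotent.isUnit_one_add hε1nil).exists_right_inv
        set τ := -(ε1 * v) with hτ
        have hτI : ∀ k, τ.coeff k ∈ I := by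
          intro k
          rw [hτ, HahnSeries.coeff_neg]
          exact neg_mem (HahnAux.mul_coeff_mem_left hε1I k)
        have hvτ : v = 1 + τ := by rw [hτ]; linear_combination hv
        set δ := εd - ε1 with hδ
        have hδI : ∀ k, δ.coeff k ∈ I := fun k => by
          rw [hδ, HahnSeries.coeff_sub]; exact sub_mem (hεI k) (hε1I k)
        have hδneg : ∀ k < 0, δ.coeff k = 0 := by
          intro k hk
          rw [hδ, HahnSeries.coeff_sub, hε1, HahnAux.negPart_coeff, if_pos hk, sub_self]
        set g := 1 + v * δ with hg
        have hg_eq : (1 + εd) = (1 + ε1) * g := by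
          have h2 : (1 + ε1) * g = 1 + ε1 + ((1 + ε1) * v) * δ := by rw [hg]; ring
          rw [h2, hv, one_mul, hδ]; ring
        have hgd : ∀ k, g.coeff k = (1 : HahnSeries ℤ (IterLaurent A n)).coeff k
            + δ.coeff k + (τ * δ).coeff k := by
          intro k
          rw [hg, hvτ]
          have : (1 + (1 + τ) * δ) = 1 + (δ + τ * δ) := by ring
          rw [this, HahnSeries.coeff_add, HahnSeries.coeff_add]
          ring
        have hgneg : ∀ k < 0, g.coeff k ∈ I ^ 2 := by
          intro k hk
          rw [hgd k, HahnSeries.coeff_one, if_neg (by omega), hδneg k hk, zero_add, zero_add,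
            pow_two]
          exact HahnAux.mul_coeff_mem_mul hτI hδI k
        have hg0 : IsUnit (g.coeff 0) := by
          rw [hgd 0, HahnSeries.coeff_one, if_pos rfl]
          have hmem : δ.coeff 0 + (τ * δ).coeff 0 ∈ I :=
            add_mem (hδI 0) (Ideal.mul_le_right (HahnAux.mul_coeff_mem_mul hτI hδI 0))
          have := IsNilpotent.isUnit_one_add (hnil _ hmem)
          rwa [add_assoc]
        have hI2 : (I ^ 2) ^ (M + 1) = ⊥ := by
          rw [← pow_mul]
          have h2m : 2 * (M + 1) = (M + 2) + M := by omega
          rw [h2m, pow_add, hI, Ideal.bot_mul]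
        obtain ⟨b', p', μ', hb'u, hp'neg, hp'0, hμ'nn, hμ'nil, hEq'⟩ :=
          IH (M+1) (by omega) (I ^ 2) hI2 (IterLaurent.up g)
            (by show IsUnit (g.coeff 0); exact hg0)
            (by intro k hk; show g.coeff k ∈ I ^ 2; exact hgneg k hk)
        -- assemble
        set p0 : IterLaurent A (n+1) :=
          IterLaurent.up (HahnSeries.C (↑u⁻¹ : IterLaurent A n) * sd) with hp0
        have hp0d : p0.down = (HahnSeries.C (↑u⁻¹ : IterLaurent A n)
            : HahnSeries ℤ (IterLaurent A n)) * sd := rfl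
        have hp0neg : ∀ k < 0, p0.down.coeff k = 0 := by
          intro k hk
          rw [hp0d, HahnSeries.C_apply, HahnSeries.coeff_single_zero_mul, hsd_neg k hk, mul_zero]
        have hp00 : p0.down.coeff 0 = 1 := by
          rw [hp0d, HahnSeries.C_apply, HahnSeries.coeff_single_zero_mul, hsd0, ← hu]
          exact u.inv_mul
        set e1 : IterLaurent A (n+1) := IterLaurent.up ε1 with he1
        have he1nil : IsNilpotent e1 := nilp_down.2 hε1nil
        have hμ'd : IsNilpotent μ' := hμ'nil
        refine ⟨↑u * b', p0 * p', e1 + μ' + e1 * μ', (u.isUnit).mul hb'u, ?_, ?_, ?_, ?_, ?_⟩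
        · intro k hk
          rw [down_mul]
          exact HahnAux.mul_coeff_lt (supp_Ici hp0neg) (supp_Ici hp'neg) (by omega)
        · rw [down_mul]
          have := HahnAux.mul_coeff_of_le (supp_Ici hp0neg) (supp_Ici hp'neg)
          simp only [add_zero] at this
          rw [this, hp00, hp'0, mul_one]
        · intro k hk
          rw [down_add, down_add, down_mul, HahnSeries.coeff_add, HahnSeries.coeff_add]
          have hsupe1 : e1.down.support ⊆ Set.Iic (-1) := by
            intro j hj
            have := HahnAux.negPart_support εd hj
            simp only [Set.mem_Iio] at this
            simp only [Set.mem_Iic]; omega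
          have hsupμ' : μ'.down.support ⊆ Set.Iic (-1) := by
            intro j hj
            rw [HahnSeries.mem_support] at hj
            simp only [Set.mem_Iic]
            by_contra hc
            exact hj (hμ'nn j (by omega))
          have h3 : (e1.down * μ'.down).coeff k = 0 :=
            HahnAux.mul_coeff_gt hsupe1 hsupμ' (by omega)
          have h1 : e1.down.coeff k = 0 := by
            by_contra hc
            have := hsupe1 ((e1.down.mem_support k).2 hc)
            simp only [Set.mem_Iic] at this; omega
          rw [h1, hμ'nn k hk, h3, add_zero, add_zero]
        · exact Commute.isNilpotent_add (Commute.all _ _)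
            (Commute.isNilpotent_add (Commute.all _ _) he1nil hμ'd)
            (Commute.isNilpotent_mul_right (Commute.all _ _) he1nil)
        · have hCmul : IterLaurent.up (HahnSeries.C ((↑u : IterLaurent A n) * b'))
              = IterLaurent.up (HahnSeries.C (↑u : IterLaurent A n)) *
                IterLaurent.up (HahnSeries.C b') := by
            apply down_inj
            show (HahnSeries.C ((↑u : IterLaurent A n) * b') : HahnSeries ℤ (IterLaurent A n))
              = HahnSeries.C (↑u : IterLaurent A n) * HahnSeries.C b'
            exact map_mul _ _ _
          have hs_eq : IterLaurent.up sd
              = IterLaurent.up (HahnSeries.C (↑u : IterLaurent A n)) * p0 := by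
            apply down_inj
            show sd = (HahnSeries.C (↑u : IterLaurent A n) : HahnSeries ℤ (IterLaurent A n)) *
              ((HahnSeries.C (↑u⁻¹ : IterLaurent A n) : HahnSeries ℤ (IterLaurent A n)) * sd)
            rw [← mul_assoc, ← map_mul, Units.mul_inv, map_one, one_mul]
          have hfe : f = IterLaurent.up sd * (1 + IterLaurent.up εd) := by
            apply down_inj
            rw [down_mul, down_add, down_one]
            exact hfd_eq
          have h1e : (1 + IterLaurent.up εd) = (1 + e1) * IterLaurent.up g := by
            apply down_inj
            rw [down_mul, down_add, down_one]
            exact hg_eq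
          rw [hfe, h1e, hEq', hs_eq, hCmul]
          ring

lemma memVplus_C {n : ℕ} {p' : IterLaurent A n} (hp' : MemVplus A p') :
    MemVplus A (IterLaurent.up (HahnSeries.C p') : IterLaurent A (n+1)) := by
  rw [memVplus_iff] at hp' ⊢
  have hdc : (IterLaurent.up (HahnSeries.C p') : IterLaurent A (n+1)).down
      = HahnSeries.single (0 : ℤ) p' := by rw [HahnSeries.C_apply]; rfl
  refine ⟨⟨fun k hk => ?_, ?_⟩, ?_⟩
  · rw [hdc, HahnSeries.coeff_single_of_ne (by omega)]
  · rw [hdc, HahnSeries.coeff_single_same]; exact hp'.1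
  · rw [iterCoeff_succ, zero_last, zero_tail, hdc, HahnSeries.coeff_single_same]
    exact hp'.2

lemma memVminus_C {n : ℕ} {m' : IterLaurent A n} (hm' : MemVminus A m') :
    MemVminus A (IterLaurent.up (HahnSeries.C m') : IterLaurent A (n+1)) := by
  rw [memVminus_iff] at hm' ⊢
  have hdc : (IterLaurent.up (HahnSeries.C m') : IterLaurent A (n+1)).down
      = HahnSeries.single (0 : ℤ) m' := by rw [HahnSeries.C_apply]; rfl
  refine ⟨⟨fun k hk => ?_, ?_⟩, ?_, ?_⟩
  · rw [hdc, HahnSeries.coeff_single_of_ne (by omega)]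
  · rw [hdc, HahnSeries.coeff_single_same]; exact hm'.1
  · rw [iterCoeff_succ, zero_last, zero_tail, hdc, HahnSeries.coeff_single_same]
    exact hm'.2.1
  · have heq : (IterLaurent.up (HahnSeries.C m') : IterLaurent A (n+1)) - 1
        = IterLaurent.up (HahnSeries.C (m' - 1)) := by
      apply down_inj
      rw [down_sub, down_one]
      show (HahnSeries.C m' : HahnSeries ℤ (IterLaurent A n)) - 1 = HahnSeries.C (m' - 1)
      rw [map_sub, map_one]
    rw [heq]
    exact nilp_down.2 (IsNilpotent.map hm'.2.2 (HahnSeries.C :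
      (IterLaurent A n) →+* HahnSeries ℤ (IterLaurent A n)))

lemma decompA {n : ℕ} : ∀ (f : IterLaurent A n), IsUnit (iterCoeff A f 0) →
    IsNilpotent (truncNeg A f) →
    ∃ (a : Aˣ) (p m : IterLaurent A n), MemVplus A p ∧ MemVminus A m ∧
      f = iterC A n (a : A) * p * m := by
  induction n with
  | zero =>
      intro f h1 h2
      obtain ⟨u, hu⟩ := h1
      refine ⟨u, 1, 1, memVplus_one, memVminus_one, ?_⟩
      rw [mul_one, mul_one]
      exact hu.symm
  | succ n ih =>
      intro f h1 h2
      have h2d : IsNilpotent (truncNeg A f).down := nilp_down.1 h2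
      have hk : ∀ k < 0, IsNilpotent (f.down.coeff k) := by
        intro k hkneg
        have := HahnAux.coeff_isNilpotent h2d k
        rwa [truncNeg_coeff, if_pos hkneg] at this
      have h1' : IsUnit (iterCoeff A (f.down.coeff 0) 0) := by
        have he : iterCoeff A f 0 = iterCoeff A (f.down.coeff 0) 0 := by
          rw [iterCoeff_succ, zero_last, zero_tail]
        rwa [he] at h1
      have h2' : IsNilpotent (truncNeg A (f.down.coeff 0)) := by
        have := HahnAux.coeff_isNilpotent h2d 0
        rwa [truncNeg_coeff, if_neg (lt_irrefl 0), if_pos rfl] at this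
      have hf0u : IsUnit (f.down.coeff 0) := isUnit_of_P h1' h2'
      -- build the nilpotent ideal
      set F := (HahnAux.support_inter_Iic_finite f.down (-1)).toFinset with hF
      set I := Ideal.span ((F.image (fun k => f.down.coeff k)) : Set (IterLaurent A n)) with hI
      have hIrad : I ≤ (⊥ : Ideal (IterLaurent A n)).radical := by
        rw [hI, Ideal.span_le]
        intro x hx
        rw [Finset.coe_image, Set.mem_image] at hx
        obtain ⟨k, hkF, rfl⟩ := hx
        rw [Finset.mem_coe, hF, Set.Finite.mem_toFinset] at hkF
        obtain ⟨_, hk2⟩ := hkF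
        rw [Set.mem_Iic] at hk2
        obtain ⟨M, hM⟩ := hk k (by omega)
        exact Ideal.mem_radical_iff.2 ⟨M, Ideal.mem_bot.2 hM⟩
      have hIfg : I.FG := ⟨F.image (fun k => f.down.coeff k), rfl⟩
      obtain ⟨N, hN⟩ := Ideal.exists_pow_le_of_le_radical_of_fg hIrad hIfg
      have hIN : I ^ N = ⊥ := le_bot_iff.1 hN
      have hmemI : ∀ k < 0, f.down.coeff k ∈ I := by
        intro k hkneg
        by_cases hz : f.down.coeff k = 0
        · rw [hz]; exact I.zero_mem
        · apply Ideal.subset_span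
          rw [Finset.coe_image, Set.mem_image]
          refine ⟨k, ?_, rfl⟩
          rw [Finset.mem_coe, hF, Set.Finite.mem_toFinset]
          exact ⟨(f.down.mem_support k).2 hz, Set.mem_Iic.2 (by omega)⟩
      obtain ⟨b, p, μ, hbu, hpneg, hp0, hμnn, hμnil, hEq⟩ := level N I hIN f hf0u hmemI
      -- properties of b
      set w : IterLaurent A (n+1) := IterLaurent.up (HahnSeries.C b) * p * μ with hw
      have hwnil : IsNilpotent w :=
        Commute.isNilpotent_mul_left (Commute.all _ _) hμnil
      have hw0nil : IsNilpotent (w.down.coeff 0) := HahnAux.coeff_isNilpotent (nilp_down.1 hwnil) 0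
      have hfw : f = IterLaurent.up (HahnSeries.C b) * p + w := by
        rw [hEq, hw]; ring
      have hcb : (IterLaurent.up (HahnSeries.C b) * p).down.coeff 0 = b := by
        rw [down_mul]
        have : (IterLaurent.up (HahnSeries.C b)).down = HahnSeries.single (0 : ℤ) b := by
          rw [show (IterLaurent.up (HahnSeries.C b)).down
            = (HahnSeries.C b : HahnSeries ℤ (IterLaurent A n)) from rfl, HahnSeries.C_apply]
        rw [this]
        have := HahnSeries.coeff_single_zero_mul (r := b) (x := p.down) (a := (0:ℤ))
        rw [this, hp0, mul_one]
      have hb : b = f.down.coeff 0 - w.down.coeff 0 := by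
        rw [hfw, down_add, HahnSeries.coeff_add, hcb]
        ring
      have hbP1 : IsUnit (iterCoeff A b 0) := by
        rw [hb, iterCoeff_sub, sub_eq_add_neg]
        exact IsNilpotent.isUnit_add_left_of_commute
          (IsNilpotent.neg (iterCoeff_nilpotent hw0nil 0)) h1' (Commute.all _ _)
      have hbP2 : IsNilpotent (truncNeg A b) := by
        rw [hb, truncNeg_sub]
        exact Commute.isNilpotent_sub (Commute.all _ _) h2' (truncNeg_nilpotent hw0nil)
      obtain ⟨a, p', m', hp', hm', hbEq⟩ := ih b hbP1 hbP2
      -- assemble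
      have hVp : MemVplus A (IterLaurent.up (HahnSeries.C p') * p) := by
        apply memVplus_mul (memVplus_C hp')
        rw [memVplus_iff]
        refine ⟨⟨hpneg, ?_⟩, ?_⟩
        · rw [hp0]; exact nonnegS_one
        · rw [iterCoeff_succ, zero_last, zero_tail, hp0, iterCoeff_one, if_pos rfl]
      have hVm : MemVminus A (IterLaurent.up (HahnSeries.C m') * (1 + μ)) := by
        apply memVminus_mul (memVminus_C hm')
        rw [memVminus_iff]
        have h1μ0 : (1 + μ).down.coeff 0 = 1 := by
          rw [down_add, HahnSeries.coeff_add, down_one, HahnSeries.coeff_one, if_pos rfl,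
            hμnn 0 le_rfl, add_zero]
        refine ⟨⟨fun k hkpos => ?_, ?_⟩, ?_, ?_⟩
        · rw [down_add, HahnSeries.coeff_add, down_one, HahnSeries.coeff_one,
            if_neg (by omega), hμnn k (by omega), add_zero]
        · rw [h1μ0]; exact nonposS_one
        · rw [iterCoeff_succ, zero_last, zero_tail, h1μ0, iterCoeff_one, if_pos rfl]
        · rw [add_sub_cancel_left]
          exact hμnil
      refine ⟨a, IterLaurent.up (HahnSeries.C p') * p,
        IterLaurent.up (HahnSeries.C m') * (1 + μ), hVp, hVm, ?_⟩
      have hC_decomp : IterLaurent.up (HahnSeries.C b)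
          = iterC A (n+1) (a : A) * IterLaurent.up (HahnSeries.C p')
            * IterLaurent.up (HahnSeries.C m') := by
        apply down_inj
        rw [down_mul, down_mul]
        show (HahnSeries.C b : HahnSeries ℤ (IterLaurent A n))
          = (HahnSeries.C (iterC A n (a : A)) : HahnSeries ℤ (IterLaurent A n)) *
            HahnSeries.C p' * HahnSeries.C m'
        rw [hbEq, map_mul, map_mul]
      rw [hEq, hC_decomp]
      ring

lemma forward_coeff0 {n : ℕ} (a : A) {p m : IterLaurent A n} (hp : MemVplus A p)
    (hm : MemVminus A m) :
    ∃ ν : A, IsNilpotent ν ∧ iterCoeff A (iterC A n a * p * m) 0 = a * (1 + ν) := by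
  rw [memVplus_iff] at hp
  rw [memVminus_iff] at hm
  have hsplit : iterC A n a * p * m = iterC A n a * p + iterC A n a * (p * (m - 1)) := by ring
  refine ⟨iterCoeff A (p * (m - 1)) 0, ?_, ?_⟩
  · exact iterCoeff_nilpotent (Commute.isNilpotent_mul_left (Commute.all _ _) hm.2.2) 0
  · rw [hsplit, iterCoeff_add, iterCoeff_C_mul, iterCoeff_C_mul, hp.2]
    ring

lemma forward_truncNeg {n : ℕ} (a : A) {p m : IterLaurent A n} (hp : MemVplus A p)
    (hm : MemVminus A m) : IsNilpotent (truncNeg A (iterC A n a * p * m)) := by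
  rw [memVplus_iff] at hp
  rw [memVminus_iff] at hm
  have hsplit : iterC A n a * p * m = iterC A n a * p + iterC A n a * p * (m - 1) := by ring
  rw [hsplit, truncNeg_add, truncNeg_eq_zero (nonnegS_mul (nonnegS_C a) hp.1), zero_add]
  exact truncNeg_nilpotent (Commute.isNilpotent_mul_left (Commute.all _ _) hm.2.2)

/-- the equivalence of part (a) -/
lemma equivA {n : ℕ} (f : IterLaurent A n) :
    (∃ (a : Aˣ) (p m : IterLaurent A n), MemVplus A p ∧ MemVminus A m ∧
        f = iterC A n (a : A) * p * m) ↔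
      (IsUnit (iterCoeff A f 0) ∧ IsNilpotent (truncNeg A f)) := by
  constructor
  · rintro ⟨a, p, m, hp, hm, rfl⟩
    obtain ⟨ν, hν, hc⟩ := forward_coeff0 (a : A) hp hm
    refine ⟨?_, forward_truncNeg _ hp hm⟩
    rw [hc]
    exact (a.isUnit).mul (IsNilpotent.isUnit_one_add hν)
  · rintro ⟨h1, h2⟩
    exact decompA f h1 h2

/-- the equivalence of part (b) -/
lemma equivB {n : ℕ} (f : IterLaurent A n) :
    (∃ (a : A) (p m : IterLaurent A n), IsNilpotent a ∧ MemVplus A p ∧ MemVminus A m ∧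
        f = iterC A n (1 + a) * p * m) ↔
      (IsNilpotent (iterCoeff A f 0 - 1) ∧ IsNilpotent (truncNeg A f)) := by
  constructor
  · rintro ⟨a, p, m, ha, hp, hm, rfl⟩
    obtain ⟨ν, hν, hc⟩ := forward_coeff0 (1 + a) hp hm
    refine ⟨?_, forward_truncNeg _ hp hm⟩
    rw [hc]
    have : (1 + a) * (1 + ν) - 1 = a + (ν + a * ν) := by ring
    rw [this]
    exact Commute.isNilpotent_add (Commute.all _ _) ha
      (Commute.isNilpotent_add (Commute.all _ _) hν
        (Commute.isNilpotent_mul_left (Commute.all _ _) hν))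
  · rintro ⟨h1, h2⟩
    have h1u : IsUnit (iterCoeff A f 0) := by
      have : iterCoeff A f 0 = 1 + (iterCoeff A f 0 - 1) := by ring
      rw [this]
      exact IsNilpotent.isUnit_one_add h1
    obtain ⟨a, p, m, hp, hm, hEq⟩ := decompA f h1u h2
    obtain ⟨ν, hν, hc⟩ := forward_coeff0 (a : A) hp hm
    rw [← hEq] at hc
    refine ⟨(a : A) - 1, p, m, ?_, hp, hm, ?_⟩
    · have : (a : A) - 1 = (iterCoeff A f 0 - 1) - (a : A) * ν := by rw [hc]; ring
      rw [this]
      exact Commute.isNilpotent_sub (Commute.all _ _) h1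
        (Commute.isNilpotent_mul_left (Commute.all _ _) hν)
    · rw [show (1 : A) + ((a : A) - 1) = (a : A) by ring]
      exact hEq

/-- inverse preserves the conditions -/
lemma inv_P {n : ℕ} {x y : IterLaurent A n} (hxy : x * y = 1)
    (h1 : IsUnit (iterCoeff A x 0)) (h2 : IsNilpotent (truncNeg A x)) :
    IsUnit (iterCoeff A y 0) ∧ IsNilpotent (truncNeg A y) ∧
      IsNilpotent (iterCoeff A y 0 * iterCoeff A x 0 - 1) := by
  set s := x - truncNeg A x with hs
  have hns : NonnegS s := nonnegS_sub_truncNeg x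
  have hcs : iterCoeff A s 0 = iterCoeff A x 0 := by
    rw [hs, iterCoeff_sub, truncNeg_coeff0, sub_zero]
  obtain ⟨ys, hy1, hy2, hy3⟩ := exists_inv_iter hns (hcs ▸ h1)
  set ν := truncNeg A x with hν
  have hxe : x = s * (1 + ys * ν) := by
    have : s * (1 + ys * ν) = s + (s * ys) * ν := by ring
    rw [this, hy1, one_mul, hs, hν]; ring
  have hysν : IsNilpotent (ys * ν) := Commute.isNilpotent_mul_left (Commute.all _ _) h2
  obtain ⟨v, hv⟩ := (IsNilpotent.isUnit_one_add hysν).exists_right_inv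
  have hw : v = 1 + (-(ys * ν * v)) := by linear_combination hv
  have hwnil : IsNilpotent (-(ys * ν * v)) :=
    IsNilpotent.neg (Commute.isNilpotent_mul_right (Commute.all _ _) hysν)
  set z := ys * v with hz
  have hxz : x * z = 1 := by
    rw [hxe, hz]
    calc s * (1 + ys * ν) * (ys * v) = (s * ys) * ((1 + ys * ν) * v) := by ring
      _ = 1 := by rw [hy1, hv, one_mul]
  have hyz : y = z := by
    calc y = y * (x * z) := by rw [hxz, mul_one]
      _ = (x * y) * z := by ring
      _ = z := by rw [hxy, one_mul]
  have hzdec : z = ys + ys * (-(ys * ν * v)) := by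
    rw [hz]
    nth_rewrite 1 [hw]
    ring
  have hn2 : IsNilpotent (ys * (-(ys * ν * v))) :=
    Commute.isNilpotent_mul_left (Commute.all _ _) hwnil
  have hy0u : IsUnit (iterCoeff A ys 0) := IsUnit.of_mul_eq_one _ hy3
  refine ⟨?_, ?_, ?_⟩
  · rw [hyz, hzdec, iterCoeff_add, add_comm]
    exact IsNilpotent.isUnit_add_right_of_commute (iterCoeff_nilpotent hn2 0) hy0u
      (Commute.all _ _)
  · rw [hyz, hzdec, truncNeg_add, truncNeg_eq_zero hy2, zero_add]
    exact truncNeg_nilpotent hn2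
  · rw [hyz, hzdec, iterCoeff_add, ← hcs]
    have : (iterCoeff A ys 0 + iterCoeff A (ys * (-(ys * ν * v))) 0) * iterCoeff A s 0 - 1
        = (iterCoeff A ys 0 * iterCoeff A s 0 - 1)
          + iterCoeff A (ys * (-(ys * ν * v))) 0 * iterCoeff A s 0 := by ring
    rw [this, hy3, sub_self, zero_add]
    exact Commute.isNilpotent_mul_right (Commute.all _ _) (iterCoeff_nilpotent hn2 0)

end IterStuff

/-- For `n ≥ 1` and any commutative ring `A`:
(a) `Aˣ·V₊(A)·V₋(A) = {f : coeff₀(f) ∈ Aˣ and f₋ nilpotent}`;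
(b) `(1+Nil(A))·V₊(A)·V₋(A) = {f : coeff₀(f) − 1 nilpotent and f₋ nilpotent}`;
and both sets consist of units and are subgroups of `Lⁿ(A)ˣ`. -/
theorem statement5 (n : ℕ) (hn : 1 ≤ n) (A : Type) [CommRing A] :
    (∀ f : IterLaurent A n,
      (∃ (a : Aˣ) (p m : IterLaurent A n), MemVplus A p ∧ MemVminus A m ∧
          f = iterC A n (a : A) * p * m) ↔
        (IsUnit (iterCoeff A f 0) ∧ IsNilpotent (truncNeg A f))) ∧
    (∀ f : IterLaurent A n,
      (∃ (a : A) (p m : IterLaurent A n), IsNilpotent a ∧ MemVplus A p ∧ MemVminus A m ∧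
          f = iterC A n (1 + a) * p * m) ↔
        (IsNilpotent (iterCoeff A f 0 - 1) ∧ IsNilpotent (truncNeg A f))) ∧
    (∀ f : IterLaurent A n,
      IsUnit (iterCoeff A f 0) ∧ IsNilpotent (truncNeg A f) → IsUnit f) ∧
    (∃ H : Subgroup (IterLaurent A n)ˣ, ∀ u : (IterLaurent A n)ˣ,
      u ∈ H ↔ (IsUnit (iterCoeff A (u : IterLaurent A n) 0) ∧
        IsNilpotent (truncNeg A (u : IterLaurent A n)))) ∧
    (∃ H : Subgroup (IterLaurent A n)ˣ, ∀ u : (IterLaurent A n)ˣ,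
      u ∈ H ↔ (IsNilpotent (iterCoeff A (u : IterLaurent A n) 0 - 1) ∧
        IsNilpotent (truncNeg A (u : IterLaurent A n)))) := by
  refine ⟨fun f => equivA f, fun f => equivB f, fun f hf => isUnit_of_P hf.1 hf.2, ?_, ?_⟩
  · refine ⟨⟨⟨⟨setOf (fun u : (IterLaurent A n)ˣ =>
        IsUnit (iterCoeff A (u : IterLaurent A n) 0) ∧
        IsNilpotent (truncNeg A (u : IterLaurent A n))), ?_⟩, ?_⟩, ?_⟩, fun u => Iff.rfl⟩
    · rintro u v hu hv
      obtain ⟨a, p, m, hp, hm, hueq⟩ := (equivA (u : IterLaurent A n)).2 hu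
      obtain ⟨a', p', m', hp', hm', hveq⟩ := (equivA (v : IterLaurent A n)).2 hv
      apply (equivA ((u * v : (IterLaurent A n)ˣ) : IterLaurent A n)).1
      refine ⟨a * a', p * p', m * m', memVplus_mul hp hp', memVminus_mul hm hm', ?_⟩
      rw [Units.val_mul, hueq, hveq, Units.val_mul, map_mul]
      ring
    · refine ⟨?_, ?_⟩
      · rw [Units.val_one, iterCoeff_one, if_pos rfl]; exact isUnit_one
      · rw [Units.val_one, truncNeg_eq_zero nonnegS_one]; exact IsNilpotent.zero
    · rintro u ⟨h1, h2⟩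
      have h := inv_P (u.mul_inv) h1 h2
      exact ⟨h.1, h.2.1⟩
  · refine ⟨⟨⟨⟨setOf (fun u : (IterLaurent A n)ˣ =>
        IsNilpotent (iterCoeff A (u : IterLaurent A n) 0 - 1) ∧
        IsNilpotent (truncNeg A (u : IterLaurent A n))), ?_⟩, ?_⟩, ?_⟩, fun u => Iff.rfl⟩
    · rintro u v hu hv
      obtain ⟨a, p, m, ha, hp, hm, hueq⟩ := (equivB (u : IterLaurent A n)).2 hu
      obtain ⟨a', p', m', ha', hp', hm', hveq⟩ := (equivB (v : IterLaurent A n)).2 hv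
      apply (equivB ((u * v : (IterLaurent A n)ˣ) : IterLaurent A n)).1
      refine ⟨a + a' + a * a', p * p', m * m',
        Commute.isNilpotent_add (Commute.all _ _)
          (Commute.isNilpotent_add (Commute.all _ _) ha ha')
          (Commute.isNilpotent_mul_left (Commute.all _ _) ha'),
        memVplus_mul hp hp', memVminus_mul hm hm', ?_⟩
      rw [Units.val_mul, hueq, hveq,
        show (1 : A) + (a + a' + a * a') = (1 + a) * (1 + a') by ring, map_mul]
      ring
    · refine ⟨?_, ?_⟩
      · rw [Units.val_one, iterCoeff_one, if_pos rfl, sub_self]; exact IsNilpotent.zero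
      · rw [Units.val_one, truncNeg_eq_zero nonnegS_one]; exact IsNilpotent.zero
    · rintro u ⟨h1, h2⟩
      have h1u : IsUnit (iterCoeff A (u : IterLaurent A n) 0) := by
        have : iterCoeff A (u : IterLaurent A n) 0
            = 1 + (iterCoeff A (u : IterLaurent A n) 0 - 1) := by ring
        rw [this]
        exact IsNilpotent.isUnit_one_add h1
      have h := inv_P (u.mul_inv) h1u h2
      refine ⟨?_, h.2.1⟩
      have hkey : iterCoeff A ((u⁻¹ : (IterLaurent A n)ˣ) : IterLaurent A n) 0 - 1
          = (iterCoeff A ((u⁻¹ : (IterLaurent A n)ˣ) : IterLaurent A n) 0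
              * iterCoeff A (u : IterLaurent A n) 0 - 1)
            - iterCoeff A ((u⁻¹ : (IterLaurent A n)ˣ) : IterLaurent A n) 0
              * (iterCoeff A (u : IterLaurent A n) 0 - 1) := by ring
      rw [hkey]
      exact Commute.isNilpotent_sub (Commute.all _ _) h.2.2
        (Commute.isNilpotent_mul_left (Commute.all _ _) h1)
end
end

section
/- Let n ≥ 1. There exists exactly one map sgn : (ℤⁿ)^{n+1} → ℤ/2ℤ that is additive in each argument, symmetric, and satisfies sgn(l, l, r₁, …, r_{n−1}) ≡ det(l, r₁, …, r_{n−1}) (mod 2) for all l, r₁, …, r_{n−1} ∈ ℤⁿ, where det(v₁,…,vₙ) denotes the determinant of the integer n×n matrix with columns v₁,…,vₙ. Moreover this map is given by the formula sgn(l₁,…,l_{n+1}) ≡ Σ_{1≤i<j≤n+1} det(l₁, …, l̂ᵢ, …, l̂ⱼ, …, l_{n+1}, lᵢ*lⱼ) (mod 2), where a hat means the corresponding entry is omitted and lᵢ*lⱼ ∈ ℤⁿ is the coordinate-wise product of lᵢ and lⱼ. -/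
/-! ### The sign map of Vostokov–Fesenko–Parshin -/

/-- The explicit formula (Vostokov–Fesenko) for the sign map
`sgn : (ℤⁿ)^{n+1} → ℤ/2ℤ` (here `n = m+1`):
`sgn(l₁,…,l_{n+1}) = Σ_{i<j} det(l₁,…,l̂ᵢ,…,l̂ⱼ,…,l_{n+1}, lᵢ*lⱼ) mod 2`,
where `lᵢ*lⱼ` is the coordinatewise product. -/
def sgnFormula (m : ℕ) (v : Fin (m+2) → (Fin (m+1) → ℤ)) : ZMod 2 :=
  ∑ i : Fin (m+2), ∑ j : Fin (m+2),
    if hij : i < j then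
      ((Matrix.det (Matrix.of fun r c : Fin (m+1) =>
        (Fin.snoc
          (fun k : Fin m =>
            v (j.succAbove ((i.castPred (hij.trans_le (Fin.le_last j)).ne).succAbove k)))
          (fun t => v i t * v j t) : Fin (m+1) → Fin (m+1) → ℤ) c r) : ℤ) : ZMod 2)
    else 0

/-- The defining conditions for the sign map: multilinearity (additivity in each
argument), symmetry, and the diagonal condition
`sgn(l,l,r₁,…,r_{n−1}) ≡ det(l,r₁,…,r_{n−1}) (mod 2)`. -/
def SgnConds (m : ℕ) (s : (Fin (m+2) → (Fin (m+1) → ℤ)) → ZMod 2) : Prop :=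
  (∀ (v : Fin (m+2) → (Fin (m+1) → ℤ)) (k : Fin (m+2)) (x y : Fin (m+1) → ℤ),
    s (Function.update v k (x + y)) = s (Function.update v k x) + s (Function.update v k y)) ∧
  (∀ (v : Fin (m+2) → (Fin (m+1) → ℤ)) (σ : Equiv.Perm (Fin (m+2))), s (v ∘ σ) = s v) ∧
  (∀ (x : Fin (m+1) → ℤ) (r : Fin m → (Fin (m+1) → ℤ)),
    s (Fin.cons x (Fin.cons x r)) =
      ((Matrix.det (Matrix.of fun a b : Fin (m+1) =>
        (Fin.cons x r : Fin (m+1) → Fin (m+1) → ℤ) b a) : ℤ) : ZMod 2))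



lemma snoc_succAbove_bijective {n : ℕ} (p : Fin (n+1)) :
    Function.Bijective (Fin.snoc p.succAbove p : Fin (n+1) → Fin (n+1)) := by
  constructor
  · intro a b hab
    induction a using Fin.lastCases with
    | last =>
      induction b using Fin.lastCases with
      | last => rfl
      | cast b =>
        rw [Fin.snoc_last, Fin.snoc_castSucc] at hab
        exact absurd hab.symm (Fin.succAbove_ne p b)
    | cast a =>
      induction b using Fin.lastCases with
      | last =>
        rw [Fin.snoc_castSucc, Fin.snoc_last] at hab
        exact absurd hab (Fin.succAbove_ne p a)
      | cast b =>
        rw [Fin.snoc_castSucc, Fin.snoc_castSucc] at hab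
        exact congrArg Fin.castSucc (Fin.succAbove_right_injective hab)
  · intro y
    rcases eq_or_ne y p with rfl | hy
    · exact ⟨Fin.last n, Fin.snoc_last _ _⟩
    · obtain ⟨c, hc⟩ := Fin.exists_succAbove_eq hy
      exact ⟨c.castSucc, by rwa [Fin.snoc_castSucc]⟩

lemma det_single_cast {n : ℕ} (h : Fin (n+1) → Fin (n+1)) :
    (((Matrix.of fun r c => Pi.single (h c) (1:ℤ) r).det : ℤ) : ZMod 2)
      = if Function.Bijective h then 1 else 0 := by
  by_cases hb : Function.Bijective h
  · rw [if_pos hb]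
    set σ : Equiv.Perm (Fin (n+1)) := Equiv.ofBijective h hb with hσ
    have hm : (Matrix.of fun r c => Pi.single (h c) (1:ℤ) r) = Equiv.Perm.permMatrix ℤ σ⁻¹ := by
      funext r c
      have hhc : h c = σ c := rfl
      simp only [Matrix.of_apply, Equiv.Perm.permMatrix, PEquiv.toMatrix_apply,
        Equiv.toPEquiv_apply, Option.mem_def, Option.some.injEq, Pi.single_apply, hhc]
      have : (r = σ c) ↔ (c = σ⁻¹ r) := by
        rw [Equiv.Perm.inv_def, Equiv.eq_symm_apply, eq_comm]
      simp [this, eq_comm]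
    rw [hm, Matrix.det_permutation]
    rcases Int.units_eq_one_or (Equiv.Perm.sign σ⁻¹) with h1 | h1 <;> rw [h1] <;> decide
  · rw [if_neg hb]
    have hni : ¬ Function.Injective h := fun hi => hb (Finite.injective_iff_bijective.mp hi)
    rw [Function.not_injective_iff] at hni
    obtain ⟨a, b, hab, hne⟩ := hni
    rw [Matrix.det_zero_of_column_eq hne (fun k => congrFun (congrArg (fun z => (Pi.single z (1:ℤ) : Fin (n+1) → ℤ)) hab) k)]
    simp

lemma ext_zero {k n : ℕ} (s : (Fin k → (Fin n → ℤ)) → ZMod 2)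
    (hadd : ∀ (v : Fin k → (Fin n → ℤ)) (j : Fin k) (x y : Fin n → ℤ),
      s (Function.update v j (x+y)) = s (Function.update v j x) + s (Function.update v j y))
    (hbasis : ∀ f : Fin k → Fin n, s (fun i => Pi.single (f i) 1) = 0)
    (v : Fin k → (Fin n → ℤ)) : s v = 0 := by
  suffices H : ∀ j : ℕ, ∀ v : Fin k → (Fin n → ℤ),
      (∀ i : Fin k, j ≤ (i : ℕ) → ∃ t, v i = Pi.single t 1) → s v = 0 by
    exact H k v (fun i hi => absurd hi (Nat.not_le.mpr i.isLt))
  intro j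
  induction j with
  | zero =>
    intro v hv
    choose f hf using fun i => hv i (Nat.zero_le _)
    rw [show v = fun i => Pi.single (f i) 1 from funext hf]
    exact hbasis f
  | succ j ih =>
    intro v hv
    by_cases hjk : j < k
    · set i₀ : Fin k := ⟨j, hjk⟩ with hi₀
      let φ : (Fin n → ℤ) →+ ZMod 2 :=
        AddMonoidHom.mk' (fun y => s (Function.update v i₀ y)) (fun a b => hadd v i₀ a b)
      have hv0 : s v = φ (v i₀) := by
        show s v = s (Function.update v i₀ (v i₀))
        rw [Function.update_eq_self]
      rw [hv0, ← Finset.univ_sum_single (v i₀), map_sum]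
      refine Finset.sum_eq_zero fun t _ => ?_
      have h1 : (Pi.single t (v i₀ t) : Fin n → ℤ) = (v i₀ t) • (Pi.single t 1 : Fin n → ℤ) := by
        rw [← Pi.single_smul, smul_eq_mul, mul_one]
      rw [h1, map_zsmul]
      have h2 : φ (Pi.single t 1) = 0 := by
        apply ih
        intro i hi
        rcases eq_or_ne i i₀ with rfl | hne
        · exact ⟨t, by rw [Function.update_self]⟩
        · rw [Function.update_of_ne hne]
          apply hv
          have : (i:ℕ) ≠ j := fun hh => hne (Fin.ext hh)
          omega
      rw [h2, smul_zero]
    · exact ih v (fun i hi => absurd (hi.trans_lt i.isLt) hjk)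

/-- the matrix appearing in the `(i,j)` term of `sgnFormula`. -/
def MatIJ (m : ℕ) (i j : Fin (m+2)) (hne : i ≠ Fin.last (m+1))
    (v : Fin (m+2) → (Fin (m+1) → ℤ)) : Matrix (Fin (m+1)) (Fin (m+1)) ℤ :=
  Matrix.of fun r c : Fin (m+1) =>
    (Fin.snoc
      (fun k : Fin m => v (j.succAbove ((i.castPred hne).succAbove k)))
      (fun t => v i t * v j t) : Fin (m+1) → Fin (m+1) → ℤ) c r

lemma sgnFormula_eq (m : ℕ) (v : Fin (m+2) → (Fin (m+1) → ℤ)) :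
    sgnFormula m v = ∑ i : Fin (m+2), ∑ j : Fin (m+2),
      if hij : i < j then
        (((MatIJ m i j (hij.trans_le (Fin.le_last j)).ne v).det : ℤ) : ZMod 2)
      else 0 := rfl

section MatFacts

variable {m : ℕ} {i j : Fin (m+2)} (hij : i < j)

/-- the enumeration of indices different from `i` and `j`. -/
def gIJ (i j : Fin (m+2)) (hne : i ≠ Fin.last (m+1)) (k : Fin m) : Fin (m+2) :=
  j.succAbove ((i.castPred hne).succAbove k)

lemma MatIJ_apply (m : ℕ) (i j : Fin (m+2)) (hne : i ≠ Fin.last (m+1)) (v)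
    (r c : Fin (m+1)) :
    MatIJ m i j hne v r c =
      (Fin.snoc (fun k : Fin m => v (gIJ i j hne k)) (fun t => v i t * v j t)
        : Fin (m+1) → Fin (m+1) → ℤ) c r := rfl

lemma succAbove_castPred (hij : i < j) (hne : i ≠ Fin.last (m+1)) :
    j.succAbove (i.castPred hne) = i :=
  Fin.succAbove_castPred_of_lt j i hij

lemma gIJ_ne_left (hij : i < j) (hne : i ≠ Fin.last (m+1)) (k : Fin m) :
    gIJ i j hne k ≠ i := by
  intro hcon
  have h2 : j.succAbove ((i.castPred hne).succAbove k) = j.succAbove (i.castPred hne) :=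
    hcon.trans (succAbove_castPred hij hne).symm
  exact Fin.succAbove_ne _ _ (Fin.succAbove_right_injective h2)

lemma gIJ_ne_right (hne : i ≠ Fin.last (m+1)) (k : Fin m) :
    gIJ i j hne k ≠ j := Fin.succAbove_ne _ _

lemma gIJ_injective (hne : i ≠ Fin.last (m+1)) : Function.Injective (gIJ i j hne) :=
  fun _ _ h => Fin.succAbove_right_injective (Fin.succAbove_right_injective h)

lemma gIJ_surj (hij : i < j) (hne : i ≠ Fin.last (m+1)) {k : Fin (m+2)}
    (hk1 : k ≠ i) (hk2 : k ≠ j) : ∃ l, gIJ i j hne l = k := by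
  obtain ⟨c, hc⟩ := Fin.exists_succAbove_eq hk2
  have hc' : c ≠ i.castPred hne := by
    intro hcon; rw [hcon, succAbove_castPred hij hne] at hc; exact hk1 hc.symm
  obtain ⟨l, hl⟩ := Fin.exists_succAbove_eq hc'
  exact ⟨l, by rw [gIJ, hl, hc]⟩

lemma MatIJ_update_left (hij : i < j) (hne : i ≠ Fin.last (m+1)) (v) (z) :
    MatIJ m i j hne (Function.update v i z) =
      (MatIJ m i j hne v).updateCol (Fin.last m) (fun t => z t * v j t) := by
  funext r c
  rw [Matrix.updateCol_apply]
  induction c using Fin.lastCases with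
  | last =>
    rw [if_pos rfl, MatIJ_apply, Fin.snoc_last]
    rw [Function.update_self, Function.update_of_ne hij.ne']
  | cast c =>
    rw [if_neg (Fin.castSucc_lt_last c).ne, MatIJ_apply, MatIJ_apply,
      Fin.snoc_castSucc, Fin.snoc_castSucc, Function.update_of_ne (gIJ_ne_left hij hne c)]

lemma MatIJ_update_right (hij : i < j) (hne : i ≠ Fin.last (m+1)) (v) (z) :
    MatIJ m i j hne (Function.update v j z) =
      (MatIJ m i j hne v).updateCol (Fin.last m) (fun t => v i t * z t) := by
  funext r c
  rw [Matrix.updateCol_apply]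
  induction c using Fin.lastCases with
  | last =>
    rw [if_pos rfl, MatIJ_apply, Fin.snoc_last]
    rw [Function.update_self, Function.update_of_ne hij.ne]
  | cast c =>
    rw [if_neg (Fin.castSucc_lt_last c).ne, MatIJ_apply, MatIJ_apply,
      Fin.snoc_castSucc, Fin.snoc_castSucc, Function.update_of_ne (gIJ_ne_right hne c)]

lemma MatIJ_update_other (hij : i < j) (hne : i ≠ Fin.last (m+1)) (v) (z)
    {k : Fin (m+2)} {l : Fin m} (hl : gIJ i j hne l = k) (hk1 : k ≠ i) (hk2 : k ≠ j) :
    MatIJ m i j hne (Function.update v k z) =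
      (MatIJ m i j hne v).updateCol l.castSucc z := by
  funext r c
  rw [Matrix.updateCol_apply]
  induction c using Fin.lastCases with
  | last =>
    rw [if_neg (Fin.castSucc_lt_last l).ne', MatIJ_apply, MatIJ_apply, Fin.snoc_last,
      Fin.snoc_last, Function.update_of_ne (Ne.symm hk1), Function.update_of_ne (Ne.symm hk2)]
  | cast c =>
    rw [MatIJ_apply, MatIJ_apply, Fin.snoc_castSucc, Fin.snoc_castSucc]
    by_cases hcl : c = l
    · subst hcl
      rw [if_pos rfl, hl, Function.update_self]
    · rw [if_neg (by simpa using hcl), Function.update_of_ne (fun hcon => hcl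
        (gIJ_injective hne (hl ▸ hcon)))]

end MatFacts

lemma sgnFormula_add (m : ℕ) (v : Fin (m+2) → (Fin (m+1) → ℤ)) (k : Fin (m+2))
    (x y : Fin (m+1) → ℤ) :
    sgnFormula m (Function.update v k (x + y)) =
      sgnFormula m (Function.update v k x) + sgnFormula m (Function.update v k y) := by
  rw [sgnFormula_eq, sgnFormula_eq, sgnFormula_eq, ← Finset.sum_add_distrib]
  refine Finset.sum_congr rfl fun i _ => ?_
  rw [← Finset.sum_add_distrib]
  refine Finset.sum_congr rfl fun j _ => ?_
  by_cases hij : i < j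
  · simp only [dif_pos hij]
    set hne := (hij.trans_le (Fin.le_last j)).ne with hhne
    rcases eq_or_ne k i with rfl | hki
    · have hxy : (fun t => (x + y) t * v j t) =
          (fun t => x t * v j t) + (fun t => y t * v j t) := by
        funext t; simp [Pi.add_apply]; ring
      rw [MatIJ_update_left hij hne v, MatIJ_update_left hij hne v,
        MatIJ_update_left hij hne v, hxy, Matrix.det_updateCol_add]
      push_cast; ring
    rcases eq_or_ne k j with rfl | hkj
    · have hxy : (fun t => v i t * (x + y) t) =
          (fun t => v i t * x t) + (fun t => v i t * y t) := by
        funext t; simp [Pi.add_apply]; ring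
      rw [MatIJ_update_right hij hne v, MatIJ_update_right hij hne v,
        MatIJ_update_right hij hne v, hxy, Matrix.det_updateCol_add]
      push_cast; ring
    · obtain ⟨l, hl⟩ := gIJ_surj hij hne hki hkj
      rw [MatIJ_update_other hij hne v _ hl hki hkj, MatIJ_update_other hij hne v _ hl hki hkj,
        MatIJ_update_other hij hne v _ hl hki hkj, Matrix.det_updateCol_add]
      push_cast; ring
  · simp [dif_neg hij]

/-! ### value on basis tuples -/

lemma matIJ_basis_term {m : ℕ} {i j : Fin (m+2)} (hij : i < j) (hne : i ≠ Fin.last (m+1))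
    (f : Fin (m+2) → Fin (m+1)) :
    (((MatIJ m i j hne (fun a => Pi.single (f a) 1)).det : ℤ) : ZMod 2)
      = if f i = f j ∧ Function.Bijective (f ∘ j.succAbove) then 1 else 0 := by
  by_cases hf : f i = f j
  · have hM : MatIJ m i j hne (fun a => Pi.single (f a) 1) =
        Matrix.of fun r c => Pi.single
          (((f ∘ j.succAbove) ∘ (Fin.snoc (i.castPred hne).succAbove (i.castPred hne))) c)
          (1:ℤ) r := by
      funext r c
      induction c using Fin.lastCases with
      | last =>
        rw [MatIJ_apply, Fin.snoc_last, Matrix.of_apply]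
        have h1 : ((f ∘ j.succAbove) ∘
            (Fin.snoc (i.castPred hne).succAbove (i.castPred hne))) (Fin.last m) = f i := by
          simp only [Function.comp_apply, Fin.snoc_last, succAbove_castPred hij hne]
        rw [h1, ← hf]
        simp only [Pi.single_apply]
        split_ifs <;> ring
      | cast c =>
        rw [MatIJ_apply, Fin.snoc_castSucc, Matrix.of_apply]
        have h1 : ((f ∘ j.succAbove) ∘
            (Fin.snoc (i.castPred hne).succAbove (i.castPred hne))) c.castSucc
            = f (gIJ i j hne c) := by
          simp only [Function.comp_apply, Fin.snoc_castSucc]; rfl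
        rw [h1]
    rw [hM, det_single_cast]
    have hbij : Function.Bijective ((f ∘ j.succAbove) ∘
        (Fin.snoc (i.castPred hne).succAbove (i.castPred hne)))
        ↔ Function.Bijective (f ∘ j.succAbove) :=
      Function.Bijective.of_comp_iff _ (snoc_succAbove_bijective _)
    rw [if_congr hbij rfl rfl,
      if_congr (show Function.Bijective (f ∘ j.succAbove) ↔ _ from
        (and_iff_right hf).symm) rfl rfl]
  · rw [if_neg (fun hc => hf hc.1)]
    rw [Matrix.det_eq_zero_of_column_eq_zero (Fin.last m) (fun r => ?_)]
    · simp
    · rw [MatIJ_apply, Fin.snoc_last]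
      simp only [Pi.single_apply]
      split_ifs with h1 h2
      · exact absurd (h1.symm.trans h2) hf
      · ring
      · ring
      · ring

section Pairs

variable {m : ℕ} {f : Fin (m+2) → Fin (m+1)}

/-- If `f ∘ j.succAbove` is bijective, `f` is injective away from `j`. -/
lemma inj_off {j : Fin (m+2)} (hbij : Function.Bijective (f ∘ j.succAbove))
    {u v : Fin (m+2)} (hu : u ≠ j) (hv : v ≠ j) (huv : f u = f v) : u = v := by
  obtain ⟨u', hu'⟩ := Fin.exists_succAbove_eq hu
  obtain ⟨v', hv'⟩ := Fin.exists_succAbove_eq hv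
  rw [← hu', ← hv']
  exact congrArg j.succAbove (hbij.1 (show (f ∘ j.succAbove) u' = (f ∘ j.succAbove) v' by
    simp only [Function.comp_apply, hu', hv', huv]))

lemma bij_of_pair (hf : Function.Surjective f) {i j : Fin (m+2)} (hij : i ≠ j)
    (heq : f i = f j) : Function.Bijective (f ∘ j.succAbove) := by
  rw [← Finite.surjective_iff_bijective]
  intro a
  obtain ⟨b, hb⟩ := hf a
  rcases eq_or_ne b j with rfl | hbj
  · obtain ⟨c, hc⟩ := Fin.exists_succAbove_eq hij
    exact ⟨c, by simp only [Function.comp_apply, hc, heq, hb]⟩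
  · obtain ⟨c, hc⟩ := Fin.exists_succAbove_eq hbj
    exact ⟨c, by simp only [Function.comp_apply, hc, hb]⟩

lemma surj_of_pair {j : Fin (m+2)} (hbij : Function.Bijective (f ∘ j.succAbove)) :
    Function.Surjective f :=
  fun a => let ⟨x, hx⟩ := hbij.2 a; ⟨j.succAbove x, hx⟩

lemma exists_unique_pair (hf : Function.Surjective f) :
    ∃! p : Fin (m+2) × Fin (m+2),
      p.1 < p.2 ∧ f p.1 = f p.2 ∧ Function.Bijective (f ∘ p.2.succAbove) := by
  obtain ⟨x, y, hne, heq⟩ := Fintype.exists_ne_map_eq_of_card_lt f (by simp)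
  obtain ⟨i, j, hij, hfij⟩ : ∃ i j : Fin (m+2), i < j ∧ f i = f j := by
    rcases hne.lt_or_gt with h | h
    · exact ⟨x, y, h, heq⟩
    · exact ⟨y, x, h, heq.symm⟩
  refine ⟨(i, j), ⟨hij, hfij, bij_of_pair hf hij.ne hfij⟩, ?_⟩
  rintro ⟨a, b⟩ ⟨hab, hfab, hbij_ab⟩
  have hbijij : Function.Bijective (f ∘ j.succAbove) := bij_of_pair hf hij.ne hfij
  have hj : a = j ∨ b = j := by
    by_contra hc
    push_neg at hc
    exact hab.ne (inj_off hbijij hc.1 hc.2 hfab)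
  rcases hj with ha | hb
  · exfalso
    have hib : i = b ∨ j = b := by
      by_contra hc
      push_neg at hc
      exact hij.ne (inj_off hbij_ab hc.1 hc.2 hfij)
    rcases hib with hib | hjb
    · exact lt_irrefl i ((hij.trans_eq ha.symm).trans (hab.trans_eq hib.symm))
    · exact lt_irrefl a (hab.trans_eq (hjb.symm.trans ha.symm))
  · have hai : a = i := inj_off hbijij (hb ▸ hab.ne) hij.ne
      ((hfab.trans (congrArg f hb)).trans hfij.symm)
    exact Prod.ext_iff.mpr ⟨hai, hb⟩

end Pairs

lemma sgnFormula_basis (m : ℕ) (f : Fin (m+2) → Fin (m+1)) :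
    sgnFormula m (fun a => Pi.single (f a) 1) =
      if Function.Surjective f then 1 else 0 := by
  rw [sgnFormula_eq]
  have hterm : ∀ i j : Fin (m+2),
      (if hij : i < j then
        (((MatIJ m i j (hij.trans_le (Fin.le_last j)).ne
            (fun a => Pi.single (f a) 1)).det : ℤ) : ZMod 2)
      else 0) =
      if i < j ∧ f i = f j ∧ Function.Bijective (f ∘ j.succAbove) then 1 else 0 := by
    intro i j
    by_cases hij : i < j
    · rw [dif_pos hij, matIJ_basis_term hij]
      by_cases hc : f i = f j ∧ Function.Bijective (f ∘ j.succAbove)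
      · rw [if_pos hc, if_pos ⟨hij, hc⟩]
      · rw [if_neg hc, if_neg (fun h => hc h.2)]
    · rw [dif_neg hij, if_neg (fun h => hij h.1)]
  simp only [hterm]
  by_cases hsurj : Function.Surjective f
  · rw [if_pos hsurj]
    obtain ⟨⟨i₀, j₀⟩, hP, huniq⟩ := exists_unique_pair hsurj
    rw [Finset.sum_eq_single i₀]
    · rw [Finset.sum_eq_single j₀]
      · rw [if_pos hP]
      · intro b _ hb
        rw [if_neg (fun h => hb (congrArg Prod.snd (huniq (i₀, b) h)))]
      · intro h; exact absurd (Finset.mem_univ j₀) h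
    · intro a _ ha
      refine Finset.sum_eq_zero fun b _ => ?_
      rw [if_neg (fun h => ha (congrArg Prod.fst (huniq (a, b) h)))]
    · intro h; exact absurd (Finset.mem_univ i₀) h
  · rw [if_neg hsurj]
    refine Finset.sum_eq_zero fun i _ => Finset.sum_eq_zero fun j _ => ?_
    rw [if_neg (fun h => hsurj (surj_of_pair h.2.2))]

/-! ### symmetry -/

lemma sgnFormula_comp_perm (m : ℕ) (v : Fin (m+2) → (Fin (m+1) → ℤ))
    (σ : Equiv.Perm (Fin (m+2))) : sgnFormula m (v ∘ σ) = sgnFormula m v := by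
  rw [← sub_eq_zero]
  refine ext_zero (fun w => sgnFormula m (w ∘ ⇑σ) - sgnFormula m w) ?_ ?_ v
  · intro w k x y
    rw [Function.update_comp_equiv, Function.update_comp_equiv, Function.update_comp_equiv,
      sgnFormula_add, sgnFormula_add, sub_add_sub_comm]
  · intro f
    have h1 : (fun i => (Pi.single (f i) 1 : Fin (m+1) → ℤ)) ∘ ⇑σ =
        fun i => (Pi.single ((f ∘ ⇑σ) i) 1 : Fin (m+1) → ℤ) := rfl
    rw [h1, sgnFormula_basis, sgnFormula_basis,
      if_congr (Function.Surjective.of_comp_iff f σ.surjective) rfl rfl, sub_self]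

/-! ### the diagonal condition -/

lemma colMat_update {m : ℕ} (w : Fin (m+1) → (Fin (m+1) → ℤ)) (k : Fin (m+1))
    (z : Fin (m+1) → ℤ) :
    (Matrix.of fun a b : Fin (m+1) => (Function.update w k z) b a) =
      (Matrix.of fun a b : Fin (m+1) => w b a).updateCol k z := by
  funext a b
  rw [Matrix.updateCol_apply]
  rcases eq_or_ne b k with rfl | hbk
  · rw [if_pos rfl, Matrix.of_apply, Function.update_self]
  · rw [if_neg hbk, Matrix.of_apply, Matrix.of_apply, Function.update_of_ne hbk]

lemma diag_aux (m : ℕ) (w : Fin (m+1) → (Fin (m+1) → ℤ)) :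
    sgnFormula m (Fin.cons (w 0) w) =
      ((Matrix.det (Matrix.of fun a b : Fin (m+1) => w b a) : ℤ) : ZMod 2) := by
  rw [← sub_eq_zero]
  refine ext_zero (fun u => sgnFormula m (Fin.cons (u 0) u) -
      ((Matrix.det (Matrix.of fun a b : Fin (m+1) => u b a) : ℤ) : ZMod 2)) ?_ ?_ w
  · intro u k x y
    rw [colMat_update, colMat_update, colMat_update, Matrix.det_updateCol_add]
    push_cast
    rw [sub_add_sub_comm]
    congr 1
    -- remains: additivity of the sgnFormula part
    refine Fin.cases ?_ (fun l => ?_) k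
    · -- k = 0 : the polarization argument
      set c : Fin (m+2) → (Fin (m+1) → ℤ) := Fin.cons (u 0) u with hc
      have h01 : (0 : Fin (m+2)) ≠ 1 := Fin.zero_ne_one
      have hcons : ∀ z : Fin (m+1) → ℤ,
          Fin.cons ((Function.update u 0 z) 0) (Function.update u 0 z)
            = Function.update (Function.update c 0 z) 1 z := by
        intro z
        funext a
        refine Fin.cases ?_ (fun b => ?_) a
        · rw [Fin.cons_zero, Function.update_self, Function.update_of_ne h01,
            Function.update_self]
        · rw [Fin.cons_succ]
          rcases eq_or_ne b 0 with rfl | hb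
          · rw [Function.update_self, Fin.succ_zero_eq_one, Function.update_self]
          · have hb1 : b.succ ≠ (1 : Fin (m+2)) := by
              rw [← Fin.succ_zero_eq_one]
              exact fun hcon => hb (Fin.succ_injective _ hcon)
            rw [Function.update_of_ne hb, Function.update_of_ne hb1,
              Function.update_of_ne (Fin.succ_ne_zero b), hc, Fin.cons_succ]
      set U : (Fin (m+1) → ℤ) → (Fin (m+1) → ℤ) → ZMod 2 :=
        fun z₁ z₂ => sgnFormula m (Function.update (Function.update c 0 z₁) 1 z₂) with hU
      have hswap : ∀ z₁ z₂, U z₁ z₂ = U z₂ z₁ := by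
        intro z₁ z₂
        have hperm : (Function.update (Function.update c 0 z₁) 1 z₂)
            ∘ ⇑(Equiv.swap (0 : Fin (m+2)) 1)
            = Function.update (Function.update c 0 z₂) 1 z₁ := by
          funext a
          rcases eq_or_ne a 0 with rfl | ha0
          · rw [Function.comp_apply, Equiv.swap_apply_left, Function.update_self,
              Function.update_of_ne h01, Function.update_self]
          rcases eq_or_ne a 1 with rfl | ha1
          · rw [Function.comp_apply, Equiv.swap_apply_right, Function.update_of_ne h01,
              Function.update_self, Function.update_self]
          · rw [Function.comp_apply, Equiv.swap_apply_of_ne_of_ne ha0 ha1,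
              Function.update_of_ne ha1, Function.update_of_ne ha0,
              Function.update_of_ne ha1, Function.update_of_ne ha0]
        rw [hU]
        dsimp only
        rw [← sgnFormula_comp_perm m _ (Equiv.swap (0:Fin (m+2)) 1), hperm]
      have hUr : ∀ z₁ z₂ z₂', U z₁ (z₂ + z₂') = U z₁ z₂ + U z₁ z₂' := by
        intro z₁ z₂ z₂'
        rw [hU]
        dsimp only
        rw [sgnFormula_add]
      have hUl : ∀ z₁ z₁' z₂, U (z₁ + z₁') z₂ = U z₁ z₂ + U z₁' z₂ := by
        intro z₁ z₁' z₂
        have hcomm : ∀ zz : Fin (m+1) → ℤ, Function.update (Function.update c 0 zz) 1 z₂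
            = Function.update (Function.update c 1 z₂) 0 zz :=
          fun zz => Function.update_comm h01 zz z₂ c
        rw [hU]
        dsimp only
        rw [hcomm (z₁ + z₁'), hcomm z₁, hcomm z₁', sgnFormula_add]
      rw [hcons, hcons, hcons]
      show U (x+y) (x+y) = U x x + U y y
      rw [hUl, hUr, hUr, hswap y x]
      have h2 : U x y + U x y = 0 := CharTwo.add_self_eq_zero _
      calc U x x + U x y + (U x y + U y y)
          = U x x + U y y + (U x y + U x y) := by ring
        _ = U x x + U y y := by rw [h2, add_zero]
    · -- k = l.succ
      have hconsx : ∀ z : Fin (m+1) → ℤ,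
          (Fin.cons ((Function.update u l.succ z) 0) (Function.update u l.succ z)
            : Fin (m+2) → Fin (m+1) → ℤ)
          = Function.update (Fin.cons (u 0) u : Fin (m+2) → Fin (m+1) → ℤ) l.succ.succ z := by
        intro z
        funext a
        refine Fin.cases ?_ (fun b => ?_) a
        · rw [Fin.cons_zero, Function.update_of_ne (Fin.succ_ne_zero l).symm,
            Function.update_of_ne (Fin.succ_ne_zero l.succ).symm, Fin.cons_zero]
        · rw [Fin.cons_succ]
          rcases eq_or_ne b l.succ with rfl | hb
          · rw [Function.update_self, Function.update_self]
          · rw [Function.update_of_ne hb,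
              Function.update_of_ne (fun hcon => hb (Fin.succ_injective _ hcon)),
              Fin.cons_succ]
      rw [hconsx, hconsx, hconsx, sgnFormula_add]
  · intro f
    dsimp only
    have hw : (Fin.cons ((fun i => (Pi.single (f i) 1 : Fin (m+1) → ℤ)) 0)
        (fun i => (Pi.single (f i) 1 : Fin (m+1) → ℤ)) : Fin (m+2) → (Fin (m+1) → ℤ))
        = fun a => Pi.single ((Fin.cons (f 0) f : Fin (m+2) → Fin (m+1)) a) 1 := by
      funext a
      refine Fin.cases ?_ (fun b => ?_) a
      · rw [Fin.cons_zero, Fin.cons_zero]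
      · rw [Fin.cons_succ, Fin.cons_succ]
    rw [hw, sgnFormula_basis, det_single_cast]
    have hiff : Function.Surjective (Fin.cons (f 0) f : Fin (m+2) → Fin (m+1))
        ↔ Function.Bijective f := by
      rw [← Finite.surjective_iff_bijective]
      constructor
      · intro h y
        obtain ⟨a, ha⟩ := h y
        refine Fin.cases ?_ (fun b hb => ?_) a ha
        · intro h0; exact ⟨0, by rwa [Fin.cons_zero] at h0⟩
        · exact ⟨b, by rwa [Fin.cons_succ] at hb⟩
      · intro h y
        obtain ⟨b, hb⟩ := h y
        exact ⟨b.succ, by rwa [Fin.cons_succ]⟩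
    rw [if_congr hiff rfl rfl, sub_self]

lemma sgnFormula_diag (m : ℕ) (x : Fin (m+1) → ℤ) (r : Fin m → (Fin (m+1) → ℤ)) :
    sgnFormula m (Fin.cons x (Fin.cons x r)) =
      ((Matrix.det (Matrix.of fun a b : Fin (m+1) =>
        (Fin.cons x r : Fin (m+1) → Fin (m+1) → ℤ) b a) : ℤ) : ZMod 2) := by
  have := diag_aux m (Fin.cons x r)
  rwa [Fin.cons_zero] at this

lemma sgnFormula_conds (m : ℕ) : SgnConds m (sgnFormula m) :=
  ⟨sgnFormula_add m, sgnFormula_comp_perm m, sgnFormula_diag m⟩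

lemma conds_unique (m : ℕ) (s₁ s₂ : (Fin (m+2) → (Fin (m+1) → ℤ)) → ZMod 2)
    (h₁ : SgnConds m s₁) (h₂ : SgnConds m s₂) : s₁ = s₂ := by
  funext v
  rw [← sub_eq_zero]
  refine ext_zero (fun w => s₁ w - s₂ w) ?_ ?_ v
  · intro w k x y
    rw [h₁.1, h₂.1, sub_add_sub_comm]
  · intro f
    obtain ⟨i, j, hne, heq⟩ := Fintype.exists_ne_map_eq_of_card_lt f (by simp)
    set τ : Equiv.Perm (Fin (m+2)) := Equiv.swap 0 i with hτ
    set j' : Fin (m+2) := τ j with hj'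
    have h0j' : (0 : Fin (m+2)) ≠ j' := by
      intro hcon
      have : j = τ 0 := by
        rw [hj'] at hcon
        have := congrArg τ hcon
        rw [hτ, Equiv.swap_apply_self] at this
        exact this.symm
      rw [hτ, Equiv.swap_apply_left] at this
      exact hne this.symm
    set σ : Equiv.Perm (Fin (m+2)) := (Equiv.swap 1 j').trans τ with hσ
    have hσ0 : σ 0 = i := by
      show τ (Equiv.swap 1 j' 0) = i
      rw [Equiv.swap_apply_of_ne_of_ne Fin.zero_ne_one h0j', hτ, Equiv.swap_apply_left]
    have hσ1 : σ 1 = j := by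
      show τ (Equiv.swap 1 j' 1) = j
      rw [Equiv.swap_apply_left, hj', Equiv.swap_apply_self]
    set e : Fin (m+2) → (Fin (m+1) → ℤ) := fun a => Pi.single (f a) 1 with he
    set x₀ : Fin (m+1) → ℤ := Pi.single (f i) 1 with hx₀
    set r₀ : Fin m → (Fin (m+1) → ℤ) := fun d => Pi.single (f (σ d.succ.succ)) 1 with hr₀
    have hcomp : e ∘ ⇑σ = Fin.cons x₀ (Fin.cons x₀ r₀) := by
      funext a
      refine Fin.cases ?_ (fun b => ?_) a
      · rw [Function.comp_apply, hσ0, Fin.cons_zero]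
      · rw [Function.comp_apply, Fin.cons_succ]
        refine Fin.cases ?_ (fun d => ?_) b
        · rw [Fin.succ_zero_eq_one, hσ1, Fin.cons_zero, he, hx₀]
          exact congrArg (fun z => (Pi.single z 1 : Fin (m+1) → ℤ)) heq.symm
        · rw [Fin.cons_succ]
    have h1e : s₁ e = s₂ e := by
      rw [← h₁.2.1 e σ, ← h₂.2.1 e σ, hcomp, h₁.2.2, h₂.2.2]
    rw [h1e, sub_self]


/-! ## Statement 9 -/

/-- For `n = m+1 ≥ 1` there is exactly one map
`sgn : (ℤⁿ)^{n+1} → ℤ/2ℤ` which is additive in each argument, symmetric, and satisfies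
`sgn(l,l,r₁,…,r_{n−1}) ≡ det(l,r₁,…,r_{n−1}) (mod 2)`; moreover it is given by the
explicit Vostokov–Fesenko formula. -/
theorem statement9 (m : ℕ) :
    (∃! s : (Fin (m+2) → (Fin (m+1) → ℤ)) → ZMod 2, SgnConds m s) ∧
    SgnConds m (sgnFormula m) := by
  exact ⟨⟨sgnFormula m, sgnFormula_conds m,
    fun s hs => conds_unique m s (sgnFormula m) hs (sgnFormula_conds m)⟩,
    sgnFormula_conds m⟩
end
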